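/- arXiv:2501.17263 — 2 statements merged into one kernel-verified Lean document; each statement's English description precedes it below -/
import Mathlib

section
/- Let Γ be an ample group over the Cantor space X acting minimally and let K ⊆ X be Γ-étale. Let Γ_K denote the smallest full subgroup of Homeo(K) containing γ_K for every involution γ ∈ Γ. Then Γ_K = {γ restricted to K : γ ∈ Γ and γ(K) = K}. In particular, Γ_K is an ample group over K. -/
open MeasureTheory Set

/-- The group structure on self-homeomorphisms of a topological space,
with `(f * g) x = f (g x)`. -/
instance Homeomorph.instGroupSelf {Y : Type*} [TopologicalSpace Y] : Group (Y ≃ₜ Y) where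
  mul f g := g.trans f
  one := Homeomorph.refl Y
  inv := Homeomorph.symm
  mul_assoc := fun _ _ _ => rfl
  one_mul := fun _ => by ext x; rfl
  mul_one := fun _ => by ext x; rfl
  inv_mul_cancel := fun a => by ext x; exact a.symm_apply_apply x

/-- `Y` is a Cantor space: nonempty, compact, metrizable, totally disconnected and perfect. -/
def IsCantorSpace (Y : Type*) [TopologicalSpace Y] : Prop :=
  Nonempty Y ∧ CompactSpace Y ∧ TopologicalSpace.MetrizableSpace Y ∧ TotallyDisconnectedSpace Y ∧
    Perfect (Set.univ : Set Y)

/-- `g` coincides piecewise, on a finite clopen partition of the space, with elements of `Γ`. -/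
def PiecewiseIn {Y : Type*} [TopologicalSpace Y] (Γ : Subgroup (Y ≃ₜ Y)) (g : Y ≃ₜ Y) : Prop :=
  ∃ (n : ℕ) (U : Fin n → Set Y) (γ : Fin n → (Y ≃ₜ Y)),
    (∀ i, IsClopen (U i)) ∧ (∀ i, γ i ∈ Γ) ∧
    Pairwise (Function.onFun Disjoint U) ∧ (⋃ i, U i) = Set.univ ∧
    (∀ i, ∀ x ∈ U i, g x = γ i x)

/-- A subgroup of `Homeo(Y)` is full if it contains every homeomorphism which coincides
piecewise, on a finite clopen partition, with elements of the subgroup. -/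
def IsFullGroup {Y : Type*} [TopologicalSpace Y] (Γ : Subgroup (Y ≃ₜ Y)) : Prop :=
  ∀ g : Y ≃ₜ Y, PiecewiseIn Γ g → g ∈ Γ

/-- Every finitely generated subgroup is finite. -/
def IsLocallyFiniteGroup {Y : Type*} [TopologicalSpace Y] (Γ : Subgroup (Y ≃ₜ Y)) : Prop :=
  ∀ S : Finset (Y ≃ₜ Y), (S : Set (Y ≃ₜ Y)) ⊆ (Γ : Set (Y ≃ₜ Y)) →
    ((Subgroup.closure (S : Set (Y ≃ₜ Y)) : Subgroup (Y ≃ₜ Y)) : Set (Y ≃ₜ Y)).Finite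

/-- An ample group over `Y`: countable, locally finite, full, with clopen fixed-point sets. -/
def IsAmpleGroup {Y : Type*} [TopologicalSpace Y] (Γ : Subgroup (Y ≃ₜ Y)) : Prop :=
  (Γ : Set (Y ≃ₜ Y)).Countable ∧ IsLocallyFiniteGroup Γ ∧ IsFullGroup Γ ∧
    ∀ γ ∈ Γ, IsClopen {x : Y | γ x = x}

/-- The action of `Γ` is minimal: every orbit is dense. -/
def IsMinimalGroup {Y : Type*} [TopologicalSpace Y] (Γ : Subgroup (Y ≃ₜ Y)) : Prop :=
  ∀ x : Y, Dense {y : Y | ∃ γ ∈ Γ, γ x = y}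

/-- `M(Γ)`: the set of `Γ`-invariant Borel probability measures. -/
def InvProbMeasures {Y : Type*} [TopologicalSpace Y] [MeasurableSpace Y]
    (Γ : Subgroup (Y ≃ₜ Y)) : Set (Measure Y) :=
  {μ | IsProbabilityMeasure μ ∧ ∀ γ ∈ Γ, Measure.map (γ : Y → Y) μ = μ}

/-- `A ∼_Γ B`: some element of `Γ` maps `A` onto `B`. -/
def ClopenEquiv {Y : Type*} [TopologicalSpace Y] (Γ : Subgroup (Y ≃ₜ Y)) (A B : Set Y) : Prop :=
  ∃ γ ∈ Γ, γ '' A = B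

/-- `K` is `Γ`-thin: null for every `Γ`-invariant Borel probability measure. -/
def IsThin {Y : Type*} [TopologicalSpace Y] [MeasurableSpace Y]
    (Γ : Subgroup (Y ≃ₜ Y)) (K : Set Y) : Prop :=
  ∀ μ ∈ InvProbMeasures Γ, μ K = 0

/-- `A` is a subset of `K` which is clopen in the subspace topology of `K`. -/
def IsClopenIn {Y : Type*} [TopologicalSpace Y] (K A : Set Y) : Prop :=
  A ⊆ K ∧ IsClopen ((Subtype.val ⁻¹' A) : Set K)

/-- `K` is `Γ`-étale: `K` is closed and for every `γ ∈ Γ` and every `A ⊆ K` clopen in `K`,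
`γ(A) ∩ K` is clopen in `K`. -/
def IsEtale {Y : Type*} [TopologicalSpace Y] (Γ : Subgroup (Y ≃ₜ Y)) (K : Set Y) : Prop :=
  IsClosed K ∧ ∀ γ ∈ Γ, ∀ A : Set Y, IsClopenIn K A → IsClopenIn K ((γ : Y ≃ₜ Y) '' A ∩ K)

/-- `K` is `Γ`-malleable: closed, `Γ`-thin and `Γ`-étale. -/
def IsMalleable {Y : Type*} [TopologicalSpace Y] [MeasurableSpace Y]
    (Γ : Subgroup (Y ≃ₜ Y)) (K : Set Y) : Prop :=
  IsClosed K ∧ IsThin Γ K ∧ IsEtale Γ K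

open scoped Classical in
/-- The induced map `γ_K : K → K`:  `γ_K x = γ x` if `γ x ∈ K`, and `γ_K x = x` otherwise. -/
noncomputable def inducedMap {Y : Type*} [TopologicalSpace Y] (γ : Y ≃ₜ Y) (K : Set Y) :
    K → K :=
  fun x => if h : (γ (x : Y)) ∈ K then ⟨γ (x : Y), h⟩ else x

/-- `Γ_K`: the set of homeomorphisms of `K` which are restrictions of elements of `Γ`
mapping `K` onto itself. -/
def restrGroup {Y : Type*} [TopologicalSpace Y] (Γ : Subgroup (Y ≃ₜ Y)) (K : Set Y) :
    Set ((K : Set Y) ≃ₜ (K : Set Y)) :=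
  {g | ∃ γ ∈ Γ, (γ : Y ≃ₜ Y) '' K = K ∧ ∀ x : K, (g x : Y) = γ (x : Y)}

/-- The orbit equivalence relation `R_Γ` of a subgroup of `Homeo(Y)`. -/
def orbitRelOf {Y : Type*} [TopologicalSpace Y] (Γ : Subgroup (Y ≃ₜ Y)) (x y : Y) : Prop :=
  ∃ γ ∈ Γ, γ x = y

/-- `R_Γ(K, Δ)`: the smallest equivalence relation containing `R_Γ` together with all pairs
`(x, δ x)` for `x ∈ K` and `δ ∈ Δ`, where `Δ` is a subgroup of `Homeo(K)`. -/
def extOrbitRel {Y : Type*} [TopologicalSpace Y] (Γ : Subgroup (Y ≃ₜ Y)) (K : Set Y)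
    (Δ : Set ((K : Set Y) ≃ₜ (K : Set Y))) (x y : Y) : Prop :=
  Relation.EqvGen (fun a b => orbitRelOf Γ a b ∨ ∃ ha : a ∈ K, ∃ δ ∈ Δ, ((δ ⟨a, ha⟩ : K) : Y) = b) x y

/-- Two relations on `Y` are orbit equivalent if some homeomorphism of `Y` carries one
to the other. -/
def OrbitEquivalent {Y : Type*} [TopologicalSpace Y] (R S : Y → Y → Prop) : Prop :=
  ∃ g : Y ≃ₜ Y, ∀ x y : Y, R x y ↔ S (g x) (g y)

/-- A unit system `(𝒜, Δ)`: a Boolean subalgebra `𝒜` of the clopen subsets of `Y`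
together with a subgroup `Δ ≤ Homeo(Y)` satisfying the compatibility conditions. -/
structure IsUnitSystem {Y : Type*} [TopologicalSpace Y] (𝒜 : Set (Set Y))
    (Δ : Subgroup (Y ≃ₜ Y)) : Prop where
  clopen : ∀ A ∈ 𝒜, IsClopen A
  empty_mem : (∅ : Set Y) ∈ 𝒜
  compl_mem : ∀ A ∈ 𝒜, Aᶜ ∈ 𝒜
  inter_mem : ∀ A ∈ 𝒜, ∀ B ∈ 𝒜, A ∩ B ∈ 𝒜
  maps : ∀ δ ∈ Δ, ∀ A ∈ 𝒜, (δ : Y ≃ₜ Y) '' A ∈ 𝒜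
  eval_injective : ∀ δ ∈ Δ, (∀ A ∈ 𝒜, (δ : Y ≃ₜ Y) '' A = A) → δ = 1
  fixed_mem : ∀ δ ∈ Δ, {x : Y | δ x = x} ∈ 𝒜
  full : ∀ g : Y ≃ₜ Y, (∃ (n : ℕ) (U : Fin n → Set Y) (γ : Fin n → (Y ≃ₜ Y)),
      (∀ i, U i ∈ 𝒜) ∧ (∀ i, γ i ∈ Δ) ∧ Pairwise (Function.onFun Disjoint U) ∧
      (⋃ i, U i) = Set.univ ∧ (∀ i, ∀ x ∈ U i, g x = γ i x)) → g ∈ Δ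

/-- An atom of a (finite) Boolean algebra of sets. -/
def IsAtomOf {Y : Type*} (𝒜 : Set (Set Y)) (A : Set Y) : Prop :=
  A ∈ 𝒜 ∧ A ≠ ∅ ∧ ∀ B ∈ 𝒜, B ⊆ A → B = ∅ ∨ B = A

/-- A finite unit system `(𝒜, Δ)` is `K`-compatible if whenever an element of `Δ` maps an
atom `A` to an atom `B` and both meet `K`, it maps `K ∩ A` onto `K ∩ B`. -/
def IsKCompatible {Y : Type*} [TopologicalSpace Y] (K : Set Y) (𝒜 : Set (Set Y))
    (Δ : Subgroup (Y ≃ₜ Y)) : Prop :=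
  ∀ A B : Set Y, IsAtomOf 𝒜 A → IsAtomOf 𝒜 B → ∀ δ ∈ Δ, (δ : Y ≃ₜ Y) '' A = B →
    (K ∩ A).Nonempty → (K ∩ B).Nonempty → (δ : Y ≃ₜ Y) '' (K ∩ A) = K ∩ B


section Aux

variable {X : Type*} [TopologicalSpace X]

lemma clopen_sep [CompactSpace X] [T2Space X] [TotallyDisconnectedSpace X]
    {A B : Set X} (hA : IsCompact A) (hB : IsClosed B) (hAB : Disjoint A B) :
    ∃ U : Set X, IsClopen U ∧ A ⊆ U ∧ Disjoint U B := by
  have hBo : IsOpen Bᶜ := hB.isOpen_compl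
  have hcov : ∀ x : A, ∃ V : Set X, IsClopen V ∧ (x : X) ∈ V ∧ V ⊆ Bᶜ := by
    rintro ⟨x, hx⟩
    exact compact_exists_isClopen_in_isOpen hBo (disjoint_left.1 hAB hx)
  choose V hVcl hVx hVB using hcov
  obtain ⟨s, hs⟩ := hA.elim_finite_subcover (fun x : A => V x)
    (fun x => (hVcl x).2) (fun x hx => mem_iUnion.2 ⟨⟨x, hx⟩, hVx ⟨x, hx⟩⟩)
  refine ⟨⋃ x ∈ s, V x, isClopen_biUnion_finset (fun x _ => hVcl x), ?_, ?_⟩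
  · intro x hx
    obtain ⟨i, hi⟩ := mem_iUnion.1 (hs hx)
    obtain ⟨hi1, hi2⟩ := mem_iUnion.1 hi
    exact mem_biUnion hi1 hi2
  · rw [disjoint_left]
    intro x hx hxB
    obtain ⟨i, hi1, hi2⟩ := mem_iUnion₂.1 hx
    exact (hVB i hi2) hxB

/-- Extension of a relatively clopen subset of a closed set to a clopen set. -/
lemma exists_clopen_extension [CompactSpace X] [T2Space X] [TotallyDisconnectedSpace X]
    {K A : Set X} (hK : IsClosed K) (hA : IsClopenIn K A) :
    ∃ V : Set X, IsClopen V ∧ V ∩ K = A := by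
  obtain ⟨hAK, hAcl⟩ := hA
  have hKc : IsCompact K := hK.isCompact
  haveI : CompactSpace K := isCompact_iff_compactSpace.1 hKc
  have hAc : IsCompact A := by
    have : A = Subtype.val '' ((Subtype.val ⁻¹' A : Set K)) := by
      rw [Subtype.image_preimage_coe, inter_eq_right.2 hAK]
    rw [this]
    exact (hAcl.1.isCompact).image continuous_subtype_val
  have hBc : IsClosed (K \ A) := by
    have : K \ A = Subtype.val '' ((Subtype.val ⁻¹' A : Set K)ᶜ) := by
      ext x
      simp only [mem_diff, mem_image, mem_compl_iff, mem_preimage]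
      constructor
      · rintro ⟨hxK, hxA⟩; exact ⟨⟨x, hxK⟩, hxA, rfl⟩
      · rintro ⟨⟨y, hy⟩, hyA, rfl⟩; exact ⟨hy, hyA⟩
    rw [this]
    exact ((hAcl.compl.1.isCompact).image continuous_subtype_val).isClosed
  obtain ⟨U, hUcl, hAU, hUB⟩ := clopen_sep hAc hBc
    (disjoint_left.2 fun x hx hx2 => hx2.2 hx)
  refine ⟨U, hUcl, ?_⟩
  apply Subset.antisymm
  · rintro x ⟨hxU, hxK⟩
    by_contra hxA
    exact disjoint_left.1 hUB hxU ⟨hxK, hxA⟩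
  · exact fun x hx => ⟨hAU hx, hAK hx⟩

lemma homeo_mul_apply (f g : X ≃ₜ X) (x : X) : (f * g) x = f (g x) := rfl
lemma homeo_one_apply (x : X) : (1 : X ≃ₜ X) x = x := rfl
lemma homeo_inv_eq_symm (f : X ≃ₜ X) : f⁻¹ = f.symm := rfl

/-- Glue a finite clopen partition-respecting family of homeomorphisms into one. -/
lemma glue_exists {ι : Type*} [Fintype ι] (U : ι → Set X) (γ : ι → X ≃ₜ X)
    (hcl : ∀ i, IsClopen (U i)) (hdisj : Pairwise (Function.onFun Disjoint U))
    (hcov : ⋃ i, U i = univ)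
    (hdisj' : Pairwise (Function.onFun Disjoint (fun i => (γ i) '' U i)))
    (hcov' : ⋃ i, (γ i) '' U i = univ) :
    ∃ f : X ≃ₜ X, ∀ i, ∀ x ∈ U i, f x = γ i x := by
  classical
  have hex : ∀ x : X, ∃ i, x ∈ U i := fun x => mem_iUnion.1 (hcov ▸ mem_univ x)
  have hex' : ∀ y : X, ∃ i, y ∈ (γ i) '' U i := fun y => mem_iUnion.1 (hcov' ▸ mem_univ y)
  let idx : X → ι := fun x => (hex x).choose
  let jdx : X → ι := fun y => (hex' y).choose
  have hidx : ∀ x, x ∈ U (idx x) := fun x => (hex x).choose_spec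
  have hjdx : ∀ y, y ∈ (γ (jdx y)) '' U (jdx y) := fun y => (hex' y).choose_spec
  have hidx_eq : ∀ x i, x ∈ U i → idx x = i := by
    intro x i hx
    by_contra h
    exact (hdisj h).le_bot ⟨hidx x, hx⟩
  have hjdx_eq : ∀ y i, y ∈ (γ i) '' U i → jdx y = i := by
    intro y i hy
    by_contra h
    exact (hdisj' h).le_bot ⟨hjdx y, hy⟩
  let f₀ : X → X := fun x => γ (idx x) x
  let g₀ : X → X := fun y => (γ (jdx y)).symm y
  have hf₀ : ∀ i, ∀ x ∈ U i, f₀ x = γ i x := by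
    intro i x hx; simp only [f₀, hidx_eq x i hx]
  have hg₀ : ∀ i, ∀ y ∈ (γ i) '' U i, g₀ y = (γ i).symm y := by
    intro i y hy; simp only [g₀, hjdx_eq y i hy]
  have hleft : ∀ x, g₀ (f₀ x) = x := by
    intro x
    have hx := hidx x
    have h1 : f₀ x = γ (idx x) x := rfl
    have h2 : f₀ x ∈ (γ (idx x)) '' U (idx x) := ⟨x, hx, rfl⟩
    rw [hg₀ _ _ h2, h1, Homeomorph.symm_apply_apply]
  have hright : ∀ y, f₀ (g₀ y) = y := by
    intro y
    obtain ⟨x, hx, hxy⟩ := hjdx y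
    set j := jdx y with hj
    have hsy : (γ j).symm y = x := by
      rw [← hxy]; exact Homeomorph.symm_apply_apply _ _
    have h2 : g₀ y ∈ U j := by
      show (γ j).symm y ∈ U j
      rw [hsy]; exact hx
    rw [hf₀ _ _ h2]
    show (γ j) ((γ j).symm y) = y
    exact Homeomorph.apply_symm_apply _ _
  have hfcont : Continuous f₀ := by
    rw [continuous_iff_continuousAt]
    intro x
    have hUx : U (idx x) ∈ nhds x := (hcl (idx x)).2.mem_nhds (hidx x)
    refine ContinuousAt.congr (γ (idx x)).continuous.continuousAt ?_
    filter_upwards [hUx] with y hy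
    exact (hf₀ _ _ hy).symm
  have hgcont : Continuous g₀ := by
    rw [continuous_iff_continuousAt]
    intro y
    have hUy : (γ (jdx y)) '' U (jdx y) ∈ nhds y := by
      exact IsOpen.mem_nhds ((γ (jdx y)).isOpen_image.2 (hcl _).2) (hjdx y)
    refine ContinuousAt.congr (γ (jdx y)).symm.continuous.continuousAt ?_
    filter_upwards [hUy] with z hz
    exact (hg₀ _ _ hz).symm
  exact ⟨⟨⟨f₀, g₀, hleft, hright⟩, hfcont, hgcont⟩, hf₀⟩

end Aux
section Aux2

variable {X : Type*} [TopologicalSpace X]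

lemma piecewiseIn_of_fintype (Γ : Subgroup (X ≃ₜ X)) (g : X ≃ₜ X)
    {ι : Type*} [Fintype ι] (U : ι → Set X) (γ : ι → X ≃ₜ X)
    (hcl : ∀ i, IsClopen (U i)) (hmem : ∀ i, γ i ∈ Γ)
    (hdisj : Pairwise (Function.onFun Disjoint U)) (hcov : ⋃ i, U i = univ)
    (hag : ∀ i, ∀ x ∈ U i, g x = γ i x) : PiecewiseIn Γ g := by
  classical
  let e := Fintype.equivFin ι
  refine ⟨Fintype.card ι, U ∘ e.symm, γ ∘ e.symm, fun i => hcl _, fun i => hmem _, ?_, ?_,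
    fun i x hx => hag _ _ hx⟩
  · exact fun i j hij => hdisj (e.symm.injective.ne hij)
  · rw [← hcov]
    exact e.symm.surjective.iUnion_comp U

lemma exists_swap_homeo (Γ : Subgroup (X ≃ₜ X)) (hfull : IsFullGroup Γ)
    {γ : X ≃ₜ X} (hγ : γ ∈ Γ) {A : Set X} (hA : IsClopen A)
    (hd : Disjoint A (γ '' A)) :
    ∃ τ : X ≃ₜ X, τ ∈ Γ ∧ τ * τ = 1 ∧ (∀ x ∈ A, τ x = γ x) := by
  classical
  set B := γ '' A with hB
  have hBcl : IsClopen B := ⟨(γ.isClosed_image).2 hA.1, (γ.isOpen_image).2 hA.2⟩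
  set Cp := (A ∪ B)ᶜ with hCp
  have hCpcl : IsClopen Cp := (hA.union hBcl).compl
  let U : Fin 3 → Set X := ![A, B, Cp]
  let m : Fin 3 → X ≃ₜ X := ![γ, γ.symm, 1]
  have hU0 : U 0 = A := rfl
  have hU1 : U 1 = B := rfl
  have hU2 : U 2 = Cp := rfl
  have him0 : (m 0) '' U 0 = B := rfl
  have him1 : (m 1) '' U 1 = A := by
    show γ.symm '' (γ '' A) = A
    simp [Set.image_image]
  have him2 : (m 2) '' U 2 = Cp := by
    show (1 : X ≃ₜ X) '' Cp = Cp
    exact Set.image_id' Cp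
  have hdAC : Disjoint A Cp := Disjoint.mono_left Set.subset_union_left disjoint_compl_right
  have hdBC : Disjoint B Cp := Disjoint.mono_left Set.subset_union_right disjoint_compl_right
  have hcl : ∀ i, IsClopen (U i) := by
    intro i
    fin_cases i
    exacts [hA, hBcl, hCpcl]
  have hdisj : Pairwise (Function.onFun Disjoint U) := by
    intro i j hij
    fin_cases i <;> fin_cases j <;>
      first
        | exact absurd rfl hij
        | exact hd
        | exact hd.symm
        | exact hdAC
        | exact hdAC.symm
        | exact hdBC
        | exact hdBC.symm
  have hcov : ⋃ i, U i = univ := by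
    rw [Set.iUnion_eq_univ_iff]
    intro x
    by_cases h1 : x ∈ A
    · exact ⟨0, h1⟩
    by_cases h2 : x ∈ B
    · exact ⟨1, h2⟩
    · exact ⟨2, fun h => h.elim h1 h2⟩
  have himAll : (fun i => (m i) '' U i) = ![B, A, Cp] := by
    funext i
    fin_cases i
    exacts [him0, him1, him2]
  have hdisj' : Pairwise (Function.onFun Disjoint (fun i => (m i) '' U i)) := by
    rw [himAll]
    intro i j hij
    fin_cases i <;> fin_cases j <;>
      first
        | exact absurd rfl hij
        | exact hd
        | exact hd.symm
        | exact hdAC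
        | exact hdAC.symm
        | exact hdBC
        | exact hdBC.symm
  have hcov' : ⋃ i, (m i) '' U i = univ := by
    have : ⋃ i, (m i) '' U i = ⋃ i, (![B, A, Cp] : Fin 3 → Set X) i := by rw [himAll]
    rw [this, Set.iUnion_eq_univ_iff]
    intro x
    by_cases h2 : x ∈ B
    · exact ⟨0, h2⟩
    by_cases h1 : x ∈ A
    · exact ⟨1, h1⟩
    · exact ⟨2, fun h => h.elim h1 h2⟩
  obtain ⟨τ, hτ⟩ := glue_exists U m hcl hdisj hcov hdisj' hcov'
  have hτA : ∀ x ∈ A, τ x = γ x := fun x hx => hτ 0 x hx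
  have hτB : ∀ x ∈ B, τ x = γ.symm x := fun x hx => hτ 1 x hx
  have hτC : ∀ x ∈ Cp, τ x = x := fun x hx => hτ 2 x hx
  refine ⟨τ, ?_, ?_, hτA⟩
  · exact hfull τ (piecewiseIn_of_fintype Γ τ U m hcl
      (by intro i; fin_cases i; exacts [hγ, (Subgroup.inv_mem Γ hγ : γ⁻¹ ∈ Γ), one_mem Γ]) hdisj hcov hτ)
  · apply Homeomorph.ext
    intro x
    rw [homeo_mul_apply, homeo_one_apply]
    by_cases h1 : x ∈ A
    · rw [hτA x h1]
      have : γ x ∈ B := ⟨x, h1, rfl⟩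
      rw [hτB _ this, Homeomorph.symm_apply_apply]
    by_cases h2 : x ∈ B
    · rw [hτB x h2]
      have hs : γ.symm x ∈ A := by
        obtain ⟨a, ha, rfl⟩ := h2
        rw [Homeomorph.symm_apply_apply]; exact ha
      rw [hτA _ hs, Homeomorph.apply_symm_apply]
    · have hx : x ∈ Cp := fun h => h.elim h1 h2
      rw [hτC x hx, hτC x hx]

end Aux2
section Aux3

variable {X : Type*} [TopologicalSpace X]

lemma invol_apply {γ : X ≃ₜ X} (h : γ * γ = 1) (x : X) : γ (γ x) = x :=
  congrArg (fun f : X ≃ₜ X => f x) h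

lemma invol_symm_apply {γ : X ≃ₜ X} (h : γ * γ = 1) (x : X) : γ.symm x = γ x := by
  calc γ.symm x = γ.symm (γ (γ x)) := by rw [invol_apply h x]
  _ = γ x := Homeomorph.symm_apply_apply _ _

lemma invol_mem_image_iff {γ : X ≃ₜ X} (h : γ * γ = 1) (K : Set X) (x : X) :
    x ∈ γ '' K ↔ γ x ∈ K := by
  constructor
  · rintro ⟨k, hk, rfl⟩
    rw [invol_apply h]; exact hk
  · intro hx
    exact ⟨γ x, hx, invol_apply h x⟩

lemma invol_image_invariant {γ : X ≃ₜ X} (h : γ * γ = 1) {E : Set X}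
    (hE : ∀ x ∈ E, γ x ∈ E) : γ '' E = E := by
  apply Subset.antisymm
  · rintro y ⟨x, hx, rfl⟩; exact hE x hx
  · intro x hx; exact ⟨γ x, hE x hx, invol_apply h x⟩

noncomputable def restrictHomeo (γ : X ≃ₜ X) {K : Set X} (h : γ '' K = K) : K ≃ₜ K :=
  (γ.image K).trans (Homeomorph.setCongr h)

lemma restrictHomeo_coe (γ : X ≃ₜ X) {K : Set X} (h : γ '' K = K) (x : K) :
    (restrictHomeo γ h x : X) = γ x := rfl

/-- The set where the induced map acts by `γ`, as a subset of `K`. -/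
lemma clopen_indSet {Γ : Subgroup (X ≃ₜ X)} {K : Set X} (hK : IsEtale Γ K)
    {τ : X ≃ₜ X} (hτ : τ ∈ Γ) (hinv : τ * τ = 1) :
    IsClopen {x : K | τ (x : X) ∈ K} := by
  have h1 : IsClopenIn K K := ⟨Subset.rfl, by rw [Subtype.coe_preimage_self]; exact isClopen_univ⟩
  have h2 := hK.2 τ hτ K h1
  have heq : {x : K | τ (x : X) ∈ K} = Subtype.val ⁻¹' ((τ : X ≃ₜ X) '' K ∩ K) := by
    ext x
    simp only [mem_setOf_eq, mem_preimage, mem_inter_iff]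
    constructor
    · intro hx; exact ⟨(invol_mem_image_iff hinv K _).2 hx, x.2⟩
    · rintro ⟨hx, -⟩; exact (invol_mem_image_iff hinv K _).1 hx
  rw [heq]
  exact h2.2

lemma inducedMap_invol {γ : X ≃ₜ X} (hinv : γ * γ = 1) (K : Set X) (x : K) :
    inducedMap γ K (inducedMap γ K x) = x := by
  by_cases h : γ (x : X) ∈ K
  · have e1 : inducedMap γ K x = ⟨γ (x : X), h⟩ := dif_pos h
    rw [e1]
    have h2 : γ (γ (x : X)) ∈ K := by rw [invol_apply hinv]; exact x.2
    have e2 : inducedMap γ K ⟨γ (x : X), h⟩ = ⟨γ (γ (x : X)), h2⟩ := dif_pos h2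
    rw [e2]
    exact Subtype.ext (invol_apply hinv (x : X))
  · have e1 : inducedMap γ K x = x := dif_neg h
    rw [e1, e1]

lemma inducedMap_continuous (γ : X ≃ₜ X) (K : Set X)
    (hcl : IsClopen {x : K | γ (x : X) ∈ K}) : Continuous (inducedMap γ K) := by
  classical
  rw [Topology.IsEmbedding.subtypeVal.continuous_iff]
  have heq : (Subtype.val ∘ inducedMap γ K) =
      fun x : K => if γ (x : X) ∈ K then γ (x : X) else (x : X) := by
    funext x
    exact (apply_dite Subtype.val _ _ _).trans (dite_eq_ite)
  rw [heq]
  refine Continuous.if ?_ (γ.continuous.comp continuous_subtype_val) continuous_subtype_val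
  intro a ha
  rw [hcl.frontier_eq] at ha
  exact absurd ha (Set.notMem_empty a)

noncomputable def inducedHomeo (γ : X ≃ₜ X) (K : Set X) (hinv : γ * γ = 1)
    (hcl : IsClopen {x : K | γ (x : X) ∈ K}) : K ≃ₜ K where
  toFun := inducedMap γ K
  invFun := inducedMap γ K
  left_inv := inducedMap_invol hinv K
  right_inv := inducedMap_invol hinv K
  continuous_toFun := inducedMap_continuous γ K hcl
  continuous_invFun := inducedMap_continuous γ K hcl

lemma inducedHomeo_apply (γ : X ≃ₜ X) (K : Set X) (hinv : γ * γ = 1)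
    (hcl : IsClopen {x : K | γ (x : X) ∈ K}) (x : K) :
    inducedHomeo γ K hinv hcl x = inducedMap γ K x := rfl

/-- The restriction group as a subgroup. -/
noncomputable def restrSubgroup (Γ : Subgroup (X ≃ₜ X)) (K : Set X) : Subgroup (K ≃ₜ K) where
  carrier := restrGroup Γ K
  one_mem' := by
    refine ⟨1, one_mem _, ?_, fun x => rfl⟩
    show (1 : X ≃ₜ X) '' K = K
    exact Set.image_id' K
  mul_mem' := by
    rintro a b ⟨γa, hγa, hia, hpa⟩ ⟨γb, hγb, hib, hpb⟩
    refine ⟨γa * γb, mul_mem hγa hγb, ?_, fun x => ?_⟩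
    · show (⇑γa ∘ ⇑γb) '' K = K
      rw [Set.image_comp, hib, hia]
    · show ((a (b x) : K) : X) = γa (γb (x : X))
      rw [hpa (b x), hpb x]
  inv_mem' := by
    rintro a ⟨γ, hγ, hi, hp⟩
    have him : (γ⁻¹ : X ≃ₜ X) '' K = K := by
      show γ.symm '' K = K
      conv_lhs => rw [← hi]
      rw [← Set.image_comp]
      have hid : ⇑γ.symm ∘ ⇑γ = id := funext γ.symm_apply_apply
      rw [hid, Set.image_id]
    refine ⟨γ⁻¹, inv_mem hγ, him, fun x => ?_⟩
    show ((a.symm x : K) : X) = γ.symm (x : X)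
    have h1 : ((a (a.symm x) : K) : X) = γ ((a.symm x : K) : X) := hp (a.symm x)
    rw [a.apply_symm_apply] at h1
    rw [h1, Homeomorph.symm_apply_apply]

lemma restrGroup_subset_phi_image {K : Set X} :
    ∃ φ : (X ≃ₜ X) → (K ≃ₜ K), ∀ (Γ' : Subgroup (X ≃ₜ X)),
      restrGroup Γ' K ⊆ φ '' (Γ' : Set (X ≃ₜ X)) := by
  classical
  refine ⟨fun γ => if h : γ '' K = K then restrictHomeo γ h else 1, ?_⟩
  rintro Γ' g ⟨γ, hγ, hi, hp⟩
  refine ⟨γ, hγ, ?_⟩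
  show (if h : (γ : X ≃ₜ X) '' K = K then restrictHomeo γ h else 1) = g
  rw [dif_pos hi]
  exact Homeomorph.ext fun x => Subtype.ext ((restrictHomeo_coe γ hi x).trans (hp x).symm)

end Aux3
section Matching

universe uX

lemma ncard_biUnion_finset {α β : Type*} (s : Finset β) (f : β → Set α)
    (hfin : ∀ b ∈ s, (f b).Finite)
    (hdisj : ∀ b ∈ s, ∀ c ∈ s, b ≠ c → Disjoint (f b) (f c)) :
    (⋃ b ∈ s, f b).ncard = ∑ b ∈ s, (f b).ncard := by
  classical
  induction s using Finset.induction_on with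
  | empty => simp
  | @insert a s ha ih =>
    rw [Finset.set_biUnion_insert, Finset.sum_insert ha]
    have hdisj2 : Disjoint (f a) (⋃ b ∈ s, f b) := by
      rw [Set.disjoint_iUnion_right]
      intro b
      rw [Set.disjoint_iUnion_right]
      intro hb
      exact hdisj a (Finset.mem_insert_self a s) b (Finset.mem_insert_of_mem hb)
        (fun h => ha (h ▸ hb))
    have hfin2 : (⋃ b ∈ s, f b).Finite :=
      Set.Finite.biUnion s.finite_toSet (fun b hb => hfin b (Finset.mem_insert_of_mem hb))
    rw [Set.ncard_union_eq hdisj2 (hfin a (Finset.mem_insert_self a s)) hfin2]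
    rw [ih (fun b hb => hfin b (Finset.mem_insert_of_mem hb))
      (fun b hb c hc hbc => hdisj b (Finset.mem_insert_of_mem hb) c
        (Finset.mem_insert_of_mem hc) hbc)]

noncomputable def pickFn {α : Type*} (s t : Finset α) (h : s.card = t.card)
    (a : α) (ha : a ∈ s) : α := by
  classical
  exact ((Fintype.equivOfCardEq (by rwa [Fintype.card_coe, Fintype.card_coe])
    (⟨a, ha⟩ : ↥s) : ↥t) : α)

lemma pickFn_mem {α : Type*} (s t : Finset α) (h : s.card = t.card) (a : α) (ha : a ∈ s) :
    pickFn s t h a ha ∈ t := by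
  unfold pickFn
  exact Finset.coe_mem _

lemma pickFn_inj {α : Type*} (s t : Finset α) (h : s.card = t.card) {a b : α}
    (ha : a ∈ s) (hb : b ∈ s) (hab : pickFn s t h a ha = pickFn s t h b hb) : a = b := by
  unfold pickFn at hab
  have := Subtype.coe_injective hab
  have := (Fintype.equivOfCardEq _).injective this
  exact congrArg Subtype.val this

lemma pickFn_surj {α : Type*} (s t : Finset α) (h : s.card = t.card) {b : α} (hb : b ∈ t) :
    ∃ a, ∃ ha : a ∈ s, pickFn s t h a ha = b := by
  classical
  refine ⟨((Fintype.equivOfCardEq (by rwa [Fintype.card_coe, Fintype.card_coe] :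
    Fintype.card ↥s = Fintype.card ↥t)).symm (⟨b, hb⟩ : ↥t) : ↥s), Finset.coe_mem _, ?_⟩
  unfold pickFn
  rw [Subtype.coe_eta]
  exact congrArg Subtype.val (Equiv.apply_symm_apply _ _)

lemma pickFn_congr {α : Type*} {s s' t t' : Finset α} (hs : s = s') (ht : t = t')
    (h : s.card = t.card) (h' : s'.card = t'.card) (a : α) (ha : a ∈ s) (ha' : a ∈ s') :
    pickFn s t h a ha = pickFn s' t' h' a ha' := by
  subst hs; subst ht; rfl

/-- The key combinatorial matching lemma: if two clopen sets meet every orbit of a finite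
group of homeomorphisms in sets of equal cardinality, then there is a piecewise-defined
bijection from one to the other using elements of the group. -/
lemma matching_lemma {X : Type uX} [TopologicalSpace X] (Gr : Subgroup (X ≃ₜ X)) (hGfin : ((Gr : Set (X ≃ₜ X))).Finite)
    {C D : Set X} (hC : IsClopen C) (hD : IsClopen D)
    (hcard : ∀ x : X, ({y | ∃ g ∈ Gr, g x = y} ∩ C).ncard
      = ({y | ∃ g ∈ Gr, g x = y} ∩ D).ncard) :
    ∃ (ι : Type uX) (_ : Fintype ι) (P : ι → Set X) (h : ι → X ≃ₜ X),
      (∀ j, IsClopen (P j)) ∧ (∀ j, h j ∈ Gr) ∧ Pairwise (Function.onFun Disjoint P) ∧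
      (⋃ j, P j) = C ∧ Pairwise (Function.onFun Disjoint (fun j => (h j) '' P j)) ∧
      (⋃ j, (h j) '' P j) = D := by
  classical
  haveI : Finite ↥Gr := hGfin.to_subtype
  haveI : Fintype ↥Gr := Fintype.ofFinite _
  -- patterns
  let Pat := (↥Gr → Bool × Bool)
  let π : X → Pat := fun x g => (decide ((g : X ≃ₜ X) x ∈ C), decide ((g : X ≃ₜ X) x ∈ D))
  let act : ↥Gr → Pat → Pat := fun g₀ q g => q (g * g₀)
  have act_one : ∀ q, act 1 q = q := fun q => funext fun g => congrArg q (mul_one g)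
  have act_act : ∀ a b q, act a (act b q) = act (a * b) q :=
    fun a b q => funext fun g => congrArg q (mul_assoc g a b).symm
  have hπtrans : ∀ (g : ↥Gr) (y : X), π ((g : X ≃ₜ X) y) = act g (π y) := by
    intro g y
    funext h
    show (decide ((h : X ≃ₜ X) ((g : X ≃ₜ X) y) ∈ C), decide ((h : X ≃ₜ X) ((g : X ≃ₜ X) y) ∈ D))
      = (decide (((h * g : ↥Gr) : X ≃ₜ X) y ∈ C), decide (((h * g : ↥Gr) : X ≃ₜ X) y ∈ D))
    rw [Subgroup.coe_mul, homeo_mul_apply]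
  have act_inj : ∀ (g : ↥Gr) (q r : Pat), act g q = act g r → q = r := by
    intro g q r hqr
    have := congrArg (act g⁻¹) hqr
    rwa [act_act, act_act, inv_mul_cancel, act_one, act_one] at this
  -- fibers
  let Q : Pat → Set X := fun q => {x | π x = q}
  have hQdisj : ∀ q r, q ≠ r → Disjoint (Q q) (Q r) := by
    intro q r hqr
    rw [Set.disjoint_left]
    intro x hx hx'
    exact hqr (hx.symm.trans hx')
  have hgen : ∀ (g : ↥Gr) (E : Set X), IsClopen E → ∀ b : Bool,
      IsClopen {x | decide ((g : X ≃ₜ X) x ∈ E) = b} := by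
    intro g E hE b
    cases b
    · have h1 : {x | decide ((g : X ≃ₜ X) x ∈ E) = false} = (g : X ≃ₜ X) ⁻¹' Eᶜ := by
        ext x; simp [decide_eq_false_iff_not]
      rw [h1]; exact hE.compl.preimage (g : X ≃ₜ X).continuous
    · have h1 : {x | decide ((g : X ≃ₜ X) x ∈ E) = true} = (g : X ≃ₜ X) ⁻¹' E := by
        ext x; simp [decide_eq_true_eq]
      rw [h1]; exact hE.preimage (g : X ≃ₜ X).continuous
  have hQclopen : ∀ q, IsClopen (Q q) := by
    intro q
    have heq : Q q = ⋂ g : ↥Gr, ({x | decide ((g : X ≃ₜ X) x ∈ C) = (q g).1}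
        ∩ {x | decide ((g : X ≃ₜ X) x ∈ D) = (q g).2}) := by
      ext x
      simp only [Q, mem_setOf_eq, mem_iInter, mem_inter_iff]
      constructor
      · rintro rfl
        exact fun i => ⟨rfl, rfl⟩
      · intro h
        funext i
        exact Prod.ext_iff.2 ⟨(h i).1, (h i).2⟩
    rw [heq]
    exact isClopen_iInter_of_finite fun g => (hgen g C hC _).inter (hgen g D hD _)
  have hQtrans : ∀ (g : ↥Gr) (q : Pat), (g : X ≃ₜ X) '' Q q = Q (act g q) := by
    intro g q
    ext y
    constructor
    · rintro ⟨z, hz, rfl⟩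
      show π ((g : X ≃ₜ X) z) = act g q
      rw [hπtrans, hz]
    · intro hy
      refine ⟨(g : X ≃ₜ X).symm y, ?_, (g : X ≃ₜ X).apply_symm_apply y⟩
      have h1 : π ((g : X ≃ₜ X) ((g : X ≃ₜ X).symm y)) = act g (π ((g : X ≃ₜ X).symm y)) :=
        hπtrans g _
      rw [(g : X ≃ₜ X).apply_symm_apply] at h1
      exact act_inj g _ _ (h1.symm.trans hy)
  -- membership in C and D in terms of patterns
  have hπC : ∀ x : X, ((π x) 1).1 = true ↔ x ∈ C := by
    intro x
    have h1 : ((1 : ↥Gr) : X ≃ₜ X) x = x := by rw [OneMemClass.coe_one, homeo_one_apply]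
    show decide (((1 : ↥Gr) : X ≃ₜ X) x ∈ C) = true ↔ x ∈ C
    rw [h1, decide_eq_true_eq]
  have hπD : ∀ x : X, ((π x) 1).2 = true ↔ x ∈ D := by
    intro x
    have h1 : ((1 : ↥Gr) : X ≃ₜ X) x = x := by rw [OneMemClass.coe_one, homeo_one_apply]
    show decide (((1 : ↥Gr) : X ≃ₜ X) x ∈ D) = true ↔ x ∈ D
    rw [h1, decide_eq_true_eq]
  -- orbits of patterns
  let orb : Pat → Finset Pat := fun q => Finset.image (fun g => act g q) Finset.univ
  have horb_self : ∀ q, q ∈ orb q := fun q =>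
    Finset.mem_image.2 ⟨1, Finset.mem_univ 1, act_one q⟩
  have horb_eq : ∀ (g : ↥Gr) (q : Pat), orb (act g q) = orb q := by
    intro g q
    ext r
    simp only [orb, Finset.mem_image, Finset.mem_univ, true_and]
    constructor
    · rintro ⟨h, rfl⟩
      exact ⟨h * g, (act_act h g q).symm⟩
    · rintro ⟨h, rfl⟩
      exact ⟨h * g⁻¹, by rw [act_act, inv_mul_cancel_right]⟩
  have horb_of_mem : ∀ {q r : Pat}, r ∈ orb q → orb r = orb q := by
    intro q r hr
    obtain ⟨g, -, rfl⟩ := Finset.mem_image.1 hr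
    exact horb_eq g q
  have hrealized_of_mem : ∀ {q r : Pat}, r ∈ orb q → (∃ x, π x = q) → ∃ x, π x = r := by
    intro q r hr ⟨x, hx⟩
    obtain ⟨g, -, rfl⟩ := Finset.mem_image.1 hr
    exact ⟨(g : X ≃ₜ X) x, by rw [hπtrans, hx]⟩
  let mC : Pat → Finset Pat := fun q => (orb q).filter (fun r => (r 1).1 = true)
  let mD : Pat → Finset Pat := fun q => (orb q).filter (fun r => (r 1).2 = true)
  -- the counting argument
  have hcount : ∀ x : X, (mC (π x)).card = (mD (π x)).card := by
    intro x
    set q := π x with hq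
    set O : Set X := Set.range (fun g : ↥Gr => (g : X ≃ₜ X) x) with hO
    have hOfin : O.Finite := Set.finite_range _
    have hOinv : ∀ g : ↥Gr, (g : X ≃ₜ X) '' O = O := by
      intro g
      ext y
      constructor
      · rintro ⟨z, ⟨h, rfl⟩, rfl⟩
        refine ⟨g * h, ?_⟩
        show ((g * h : ↥Gr) : X ≃ₜ X) x = (g : X ≃ₜ X) (((h : ↥Gr) : X ≃ₜ X) x)
        rw [Subgroup.coe_mul, homeo_mul_apply]
      · rintro ⟨h, rfl⟩
        refine ⟨((g⁻¹ * h : ↥Gr) : X ≃ₜ X) x, ⟨g⁻¹ * h, rfl⟩, ?_⟩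
        rw [Subgroup.coe_mul, homeo_mul_apply, ← homeo_mul_apply]
        have : (g : X ≃ₜ X) * ((g⁻¹ : ↥Gr) : X ≃ₜ X) = 1 := by
          rw [← Subgroup.coe_mul, mul_inv_cancel, OneMemClass.coe_one]
        rw [this, homeo_one_apply]
    have ht_eq : ∀ r ∈ orb q, (O ∩ Q r).ncard = (O ∩ Q q).ncard := by
      intro r hr
      obtain ⟨g, -, rfl⟩ := Finset.mem_image.1 hr
      have himg : O ∩ Q (act g q) = (g : X ≃ₜ X) '' (O ∩ Q q) := by
        rw [Set.image_inter (g : X ≃ₜ X).injective, hOinv, hQtrans]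
      rw [himg, Set.ncard_image_of_injective _ (g : X ≃ₜ X).injective]
    have hOC : O ∩ C = ⋃ r ∈ mC q, O ∩ Q r := by
      ext y
      constructor
      · rintro ⟨hyO, hyC⟩
        refine Set.mem_biUnion (Finset.mem_filter.2 ⟨?_, (hπC y).2 hyC⟩) ⟨hyO, rfl⟩
        obtain ⟨g, rfl⟩ := hyO
        rw [hπtrans]
        exact Finset.mem_image.2 ⟨g, Finset.mem_univ g, rfl⟩
      · intro hy
        obtain ⟨r, hr, hyO, hyQ⟩ := Set.mem_iUnion₂.1 hy
        refine ⟨hyO, (hπC y).1 ?_⟩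
        rw [hyQ]
        exact (Finset.mem_filter.1 hr).2
    have hOD : O ∩ D = ⋃ r ∈ mD q, O ∩ Q r := by
      ext y
      constructor
      · rintro ⟨hyO, hyD⟩
        refine Set.mem_biUnion (Finset.mem_filter.2 ⟨?_, (hπD y).2 hyD⟩) ⟨hyO, rfl⟩
        obtain ⟨g, rfl⟩ := hyO
        rw [hπtrans]
        exact Finset.mem_image.2 ⟨g, Finset.mem_univ g, rfl⟩
      · intro hy
        obtain ⟨r, hr, hyO, hyQ⟩ := Set.mem_iUnion₂.1 hy
        refine ⟨hyO, (hπD y).1 ?_⟩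
        rw [hyQ]
        exact (Finset.mem_filter.1 hr).2
    have hOCcard : (O ∩ C).ncard = (mC q).card * (O ∩ Q q).ncard := by
      rw [hOC, ncard_biUnion_finset _ _ (fun r _ => hOfin.inter_of_left _)
        (fun r hr s hs hrs => ((hQdisj r s hrs).mono (Set.inter_subset_right)
          (Set.inter_subset_right)))]
      rw [Finset.sum_congr rfl (fun r hr => ht_eq r (Finset.mem_filter.1 hr).1)]
      rw [Finset.sum_const, smul_eq_mul]
    have hODcard : (O ∩ D).ncard = (mD q).card * (O ∩ Q q).ncard := by
      rw [hOD, ncard_biUnion_finset _ _ (fun r _ => hOfin.inter_of_left _)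
        (fun r hr s hs hrs => ((hQdisj r s hrs).mono (Set.inter_subset_right)
          (Set.inter_subset_right)))]
      rw [Finset.sum_congr rfl (fun r hr => ht_eq r (Finset.mem_filter.1 hr).1)]
      rw [Finset.sum_const, smul_eq_mul]
    have hOeq : {y | ∃ g ∈ Gr, g x = y} = O := by
      ext y
      simp only [mem_setOf_eq, hO, Set.mem_range]
      constructor
      · rintro ⟨g, hg, rfl⟩; exact ⟨⟨g, hg⟩, rfl⟩
      · rintro ⟨g, rfl⟩; exact ⟨(g : X ≃ₜ X), g.2, rfl⟩
    have hmain := hcard x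
    rw [hOeq] at hmain
    rw [hOCcard, hODcard] at hmain
    have htpos : 0 < (O ∩ Q q).ncard := by
      rw [Set.ncard_pos (hOfin.inter_of_left _)]
      refine ⟨x, ⟨1, ?_⟩, rfl⟩
      show ((1 : ↥Gr) : X ≃ₜ X) x = x
      rw [OneMemClass.coe_one, homeo_one_apply]
    exact Nat.eq_of_mul_eq_mul_right htpos hmain
  -- the matching map
  have hcards : ∀ q : Pat, (∃ x, π x = q) → (mC q).card = (mD q).card := by
    rintro q ⟨x, rfl⟩
    exact hcount x
  let m : Pat → Pat := fun q =>
    if h : (∃ x, π x = q) ∧ (q 1).1 = true then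
      pickFn (mC q) (mD q) (hcards q h.1) q (Finset.mem_filter.2 ⟨horb_self q, h.2⟩)
    else q
  have hm_eq : ∀ (q : Pat) (h : (∃ x, π x = q) ∧ (q 1).1 = true),
      m q = pickFn (mC q) (mD q) (hcards q h.1) q (Finset.mem_filter.2 ⟨horb_self q, h.2⟩) :=
    fun q h => dif_pos h
  have hm_mem : ∀ (q : Pat) (h : (∃ x, π x = q) ∧ (q 1).1 = true), m q ∈ mD q := by
    intro q h
    rw [hm_eq q h]
    exact pickFn_mem _ _ _ _ _
  have hmC_congr : ∀ {q r : Pat}, orb q = orb r → mC q = mC r := by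
    intro q r h
    show (orb q).filter _ = (orb r).filter _
    rw [h]
  have hmD_congr : ∀ {q r : Pat}, orb q = orb r → mD q = mD r := by
    intro q r h
    show (orb q).filter _ = (orb r).filter _
    rw [h]
  have hm_inj : ∀ (q r : Pat), ((∃ x, π x = q) ∧ (q 1).1 = true) →
      ((∃ x, π x = r) ∧ (r 1).1 = true) → m q = m r → q = r := by
    intro q r hq hr hmqr
    by_cases horb : orb q = orb r
    · have h1 : mC q = mC r := hmC_congr horb
      have h2 : mD q = mD r := hmD_congr horb
      have hqmr : q ∈ mC r := h1 ▸ Finset.mem_filter.2 ⟨horb_self q, hq.2⟩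
      rw [hm_eq q hq, hm_eq r hr,
        pickFn_congr h1 h2 (hcards q hq.1) (hcards r hr.1) q _ hqmr] at hmqr
      exact pickFn_inj (mC r) (mD r) (hcards r hr.1) hqmr _ hmqr
    · exfalso
      have hq1 : m q ∈ orb q := Finset.filter_subset _ _ (hm_mem q hq)
      have hr1 : m r ∈ orb r := Finset.filter_subset _ _ (hm_mem r hr)
      exact horb ((horb_of_mem hq1).symm.trans (hmqr ▸ horb_of_mem hr1))
  have hm_surj : ∀ (r : Pat), (∃ x, π x = r) → (r 1).2 = true →
      ∃ q : Pat, ((∃ x, π x = q) ∧ (q 1).1 = true) ∧ m q = r := by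
    intro r hreal hside
    have hrmem : r ∈ mD r := Finset.mem_filter.2 ⟨horb_self r, hside⟩
    obtain ⟨a, ha, hpa⟩ := pickFn_surj (mC r) (mD r) (hcards r hreal) hrmem
    have haorb : a ∈ orb r := Finset.filter_subset _ _ ha
    have hareal : ∃ x, π x = a := hrealized_of_mem haorb hreal
    have haside : (a 1).1 = true := (Finset.mem_filter.1 ha).2
    refine ⟨a, ⟨hareal, haside⟩, ?_⟩
    have horba : orb a = orb r := horb_of_mem haorb
    have h1 : mC a = mC r := hmC_congr horba
    have h2 : mD a = mD r := hmD_congr horba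
    rw [hm_eq a ⟨hareal, haside⟩,
      pickFn_congr h1 h2 (hcards a hareal) (hcards r hreal) a _ (h1 ▸ Finset.mem_filter.2 ⟨horb_self a, haside⟩)]
    exact hpa
  -- assemble the pieces
  let PC : Finset Pat := Finset.univ.filter (fun q => (∃ x, π x = q) ∧ (q 1).1 = true)
  have hPCmem : ∀ q : Pat, q ∈ PC ↔ ((∃ x, π x = q) ∧ (q 1).1 = true) := by
    intro q
    simp only [PC, Finset.mem_filter, Finset.mem_univ, true_and]
  have hgex : ∀ j : ↥PC, ∃ g : ↥Gr, act g (↑j : Pat) = m ↑j := by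
    intro j
    have hj := (hPCmem ↑j).1 j.2
    have : m ↑j ∈ orb ↑j := Finset.filter_subset _ _ (hm_mem ↑j hj)
    obtain ⟨g, -, hg⟩ := Finset.mem_image.1 this
    exact ⟨g, hg⟩
  choose gsel hgsel using hgex
  have himg : ∀ j : ↥PC, ((gsel j : ↥Gr) : X ≃ₜ X) '' Q ↑j = Q (m ↑j) :=
    fun j => (hQtrans _ _).trans (congrArg Q (hgsel j))
  refine ⟨↥PC, inferInstance, fun j => Q ↑j, fun j => ((gsel j : ↥Gr) : X ≃ₜ X),
    fun j => hQclopen _, fun j => SetLike.coe_mem _, ?_, ?_, ?_, ?_⟩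
  · intro j k hjk
    exact hQdisj _ _ (fun h => hjk (Subtype.ext h))
  · ext x
    constructor
    · intro hx
      obtain ⟨j, hxj⟩ := mem_iUnion.1 hx
      have hj := (hPCmem ↑j).1 j.2
      have : ((π x) 1).1 = true := by rw [show π x = ↑j from hxj]; exact hj.2
      exact (hπC x).1 this
    · intro hx
      exact mem_iUnion.2 ⟨⟨π x, (hPCmem _).2 ⟨⟨x, rfl⟩, (hπC x).2 hx⟩⟩, rfl⟩
  · intro j k hjk
    show Disjoint (((gsel j : ↥Gr) : X ≃ₜ X) '' Q ↑j) (((gsel k : ↥Gr) : X ≃ₜ X) '' Q ↑k)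
    rw [himg j, himg k]
    refine hQdisj _ _ (fun h => hjk ?_)
    have hj := (hPCmem ↑j).1 j.2
    have hk := (hPCmem ↑k).1 k.2
    exact Subtype.ext (hm_inj _ _ hj hk h)
  · ext x
    constructor
    · intro hx
      obtain ⟨j, hxj⟩ := mem_iUnion.1 hx
      rw [himg j] at hxj
      have hj := (hPCmem ↑j).1 j.2
      have hmem : m ↑j ∈ mD ↑j := hm_mem ↑j hj
      have hside : ((m ↑j) 1).2 = true := (Finset.mem_filter.1 hmem).2
      have : ((π x) 1).2 = true := by rw [show π x = m ↑j from hxj]; exact hside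
      exact (hπD x).1 this
    · intro hx
      obtain ⟨q, hqcond, hmq⟩ := hm_surj (π x) ⟨x, rfl⟩ ((hπD x).2 hx)
      have hxq : x ∈ Q (m q) := hmq.symm
      rw [← himg ⟨q, (hPCmem q).2 hqcond⟩] at hxq
      exact mem_iUnion.2 ⟨⟨q, (hPCmem q).2 hqcond⟩, hxq⟩

end Matching
section MainFull

variable {X : Type*} [TopologicalSpace X] [CompactSpace X] [T2Space X]
  [TotallyDisconnectedSpace X]

lemma restr_full {Γ : Subgroup (X ≃ₜ X)} {K : Set X}
    (hample : IsAmpleGroup Γ) (hK : IsEtale Γ K) :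
    IsFullGroup (restrSubgroup Γ K) := by
  classical
  obtain ⟨-, hlocfin, hfull, -⟩ := hample
  intro g hg
  obtain ⟨n, U, δ, hUcl, hδmem, hUdisj, hUcov, hag⟩ := hg
  have hwit : ∀ i, ∃ γ : X ≃ₜ X, γ ∈ Γ ∧ γ '' K = K ∧ ∀ x : K, ((δ i x : K) : X) = γ (x : X) :=
    fun i => hδmem i
  choose γf hγmem hγim hγpt using hwit
  set A : Fin n → Set X := fun i => Subtype.val '' U i with hA
  set B : Fin n → Set X := fun i => γf i '' A i with hB
  have hAK : ∀ i, A i ⊆ K := by rintro i x ⟨u, hu, rfl⟩; exact u.2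
  have hAclopenIn : ∀ i, IsClopenIn K (A i) := by
    intro i
    refine ⟨hAK i, ?_⟩
    rw [Set.preimage_image_eq (U i) Subtype.val_injective]
    exact hUcl i
  have hBK : ∀ i, B i ⊆ K := by
    intro i
    rw [hB]
    simp only
    rw [← hγim i]
    exact Set.image_mono (hAK i)
  have hBval : ∀ i, Subtype.val ⁻¹' (B i) = δ i '' U i := by
    intro i
    ext x
    simp only [Set.mem_preimage]
    constructor
    · rintro ⟨a, ⟨u, hu, rfl⟩, hax⟩
      refine ⟨u, hu, ?_⟩
      apply Subtype.ext
      rw [hγpt i u]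
      exact hax
    · rintro ⟨u, hu, rfl⟩
      exact ⟨(u : X), ⟨u, hu, rfl⟩, (hγpt i u).symm⟩
  have hBclopenIn : ∀ i, IsClopenIn K (B i) := by
    intro i
    refine ⟨hBK i, ?_⟩
    rw [hBval i]
    exact ⟨(δ i).isClosed_image.2 (hUcl i).1, (δ i).isOpen_image.2 (hUcl i).2⟩
  have hAcover : ⋃ i, A i = K := by
    rw [hA]
    simp only
    rw [← Set.image_iUnion, hUcov, Set.image_univ, Subtype.range_coe]
  have hAdisj : Pairwise (Function.onFun Disjoint A) := fun i j hij =>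
    (Set.disjoint_image_iff Subtype.val_injective).2 (hUdisj hij)
  have hδg : ∀ i, δ i '' U i = g '' U i :=
    fun i => (Set.image_congr (fun x hx => (hag i x hx).symm))
  have hBdisj : Pairwise (Function.onFun Disjoint B) := by
    intro i j hij
    have h1 : ∀ k, B k = Subtype.val '' (δ k '' U k) := by
      intro k
      rw [← hBval k, Subtype.image_preimage_coe, Set.inter_eq_right.2 (hBK k)]
    show Disjoint (B i) (B j)
    rw [h1 i, h1 j, hδg i, hδg j]
    exact (Set.disjoint_image_iff Subtype.val_injective).2
      ((Set.disjoint_image_iff g.injective).2 (hUdisj hij))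
  have hBcover : ⋃ i, B i = K := by
    have h1 : ∀ k, B k = Subtype.val '' (δ k '' U k) := by
      intro k
      rw [← hBval k, Subtype.image_preimage_coe, Set.inter_eq_right.2 (hBK k)]
    calc ⋃ i, B i = ⋃ i, Subtype.val '' (g '' U i) := by
          refine Set.iUnion_congr fun i => ?_
          rw [h1 i, hδg i]
    _ = Subtype.val '' (g '' (⋃ i, U i)) := by rw [Set.image_iUnion, Set.image_iUnion]
    _ = K := by
        rw [hUcov, Set.image_univ, g.surjective.range_eq, Set.image_univ, Subtype.range_coe]
  -- clopen extensions
  have hVt : ∀ i, ∃ V : Set X, IsClopen V ∧ V ∩ K = A i :=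
    fun i => exists_clopen_extension hK.1 (hAclopenIn i)
  choose Vt hVtcl hVtK using hVt
  have hWt : ∀ i, ∃ W : Set X, IsClopen W ∧ W ∩ K = B i :=
    fun i => exists_clopen_extension hK.1 (hBclopenIn i)
  choose Wt hWtcl hWtK using hWt
  set V' : Fin n → Set X := fun i => Vt i ∩ (γf i) ⁻¹' (Wt i) with hV'
  have hV'cl : ∀ i, IsClopen (V' i) := fun i =>
    (hVtcl i).inter ((hWtcl i).preimage (γf i).continuous)
  set SV : Fin n → Set X := fun i => ⋃ j ∈ Finset.filter (fun j => j < i) Finset.univ, V' j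
    with hSV
  set SW : Fin n → Set X := fun i =>
    ⋃ j ∈ Finset.filter (fun j => j < i) Finset.univ, γf j '' V' j with hSW
  have hSVcl : ∀ i, IsClopen (SV i) := fun i =>
    isClopen_biUnion_finset (fun j _ => hV'cl j)
  have hSWcl : ∀ i, IsClopen (SW i) := fun i =>
    isClopen_biUnion_finset (fun j _ =>
      ⟨(γf j).isClosed_image.2 (hV'cl j).1, (γf j).isOpen_image.2 (hV'cl j).2⟩)
  set V : Fin n → Set X := fun i => V' i \ (SV i ∪ (γf i) ⁻¹' (SW i)) with hV
  have hVcl : ∀ i, IsClopen (V i) := fun i =>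
    (hV'cl i).diff ((hSVcl i).union ((hSWcl i).preimage (γf i).continuous))
  have hAV' : ∀ i, A i ⊆ V' i := by
    intro i x hx
    constructor
    · rw [← hVtK i] at hx; exact hx.1
    · show γf i x ∈ Wt i
      have : γf i x ∈ B i := ⟨x, hx, rfl⟩
      rw [← hWtK i] at this; exact this.1
  have hAV : ∀ i, A i ⊆ V i := by
    intro i x hx
    refine ⟨hAV' i hx, ?_⟩
    rintro (hx1 | hx2)
    · obtain ⟨j, hj, hxj⟩ := Set.mem_iUnion₂.1 hx1
      have hji : j < i := (Finset.mem_filter.1 hj).2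
      have : x ∈ A j := by
        rw [← hVtK j]; exact ⟨hxj.1, hAK i hx⟩
      exact Set.disjoint_left.1 (hAdisj hji.ne') hx this
    · rw [Set.mem_preimage] at hx2
      obtain ⟨j, hj, hxj⟩ := Set.mem_iUnion₂.1 hx2
      obtain ⟨v, hv, hvx⟩ := hxj
      have hji : j < i := (Finset.mem_filter.1 hj).2
      have hBi : γf i x ∈ B i := ⟨x, hx, rfl⟩
      have hBj : γf i x ∈ B j := by
        rw [← hvx] at hBi ⊢
        rw [← hWtK j]
        exact ⟨hv.2, hBK i hBi⟩
      exact Set.disjoint_left.1 (hBdisj hji.ne') hBi hBj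
  have hVK : ∀ i, V i ∩ K = A i := by
    intro i
    apply Set.Subset.antisymm
    · intro x hx
      rw [← hVtK i]
      exact ⟨hx.1.1.1, hx.2⟩
    · intro x hx
      exact ⟨hAV i hx, hAK i hx⟩
  have hVWK : ∀ i, (γf i '' V i) ∩ K = B i := by
    intro i
    apply Set.Subset.antisymm
    · rintro y ⟨⟨x, hx, rfl⟩, hyK⟩
      rw [← hWtK i]
      exact ⟨hx.1.2, hyK⟩
    · intro y hy
      exact ⟨Set.image_mono (hAV i) hy, hBK i hy⟩
  have hVdisj : Pairwise (Function.onFun Disjoint V) := by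
    have key : ∀ i j, j < i → Disjoint (V i) (V j) := by
      intro i j hji
      rw [Set.disjoint_left]
      intro x hxi hxj
      refine hxi.2 (Or.inl ?_)
      exact Set.mem_biUnion (Finset.mem_filter.2 ⟨Finset.mem_univ j, hji⟩) hxj.1
    intro i j hij
    rcases hij.lt_or_gt with h | h
    · exact (key j i h).symm
    · exact key i j h
  have hVimdisj : Pairwise (Function.onFun Disjoint (fun i => γf i '' V i)) := by
    have key : ∀ i j, j < i → Disjoint (γf i '' V i) (γf j '' V j) := by
      intro i j hji
      rw [Set.disjoint_left]
      rintro y ⟨x, hx, rfl⟩ hyj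
      refine hx.2 (Or.inr ?_)
      rw [Set.mem_preimage]
      refine Set.mem_biUnion (Finset.mem_filter.2 ⟨Finset.mem_univ j, hji⟩) ?_
      exact Set.image_mono Set.diff_subset hyj
    intro i j hij
    rcases hij.lt_or_gt with h | h
    · exact (key j i h).symm
    · exact key i j h
  -- the complements
  set C : Set X := (⋃ i, V i)ᶜ with hC
  set D : Set X := (⋃ i, γf i '' V i)ᶜ with hD
  have hCcl : IsClopen C := (isClopen_iUnion_of_finite hVcl).compl
  have hDcl : IsClopen D := (isClopen_iUnion_of_finite (fun i =>
    ⟨(γf i).isClosed_image.2 (hVcl i).1, (γf i).isOpen_image.2 (hVcl i).2⟩)).compl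
  have hKV : K ⊆ ⋃ i, V i := by
    rw [← hAcover]
    exact Set.iUnion_mono hAV
  have hKW : K ⊆ ⋃ i, γf i '' V i := by
    rw [← hBcover]
    exact Set.iUnion_mono (fun i => Set.image_mono (hAV i))
  -- the finite group
  set T : Finset (X ≃ₜ X) := Finset.image γf Finset.univ with hT
  have hTsub : (T : Set (X ≃ₜ X)) ⊆ (Γ : Set (X ≃ₜ X)) := by
    intro γ hγ
    obtain ⟨i, -, rfl⟩ := Finset.mem_image.1 hγ
    exact hγmem i
  set Gr : Subgroup (X ≃ₜ X) := Subgroup.closure (T : Set (X ≃ₜ X)) with hGr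
  have hGfin : ((Gr : Set (X ≃ₜ X))).Finite := hlocfin T hTsub
  have hγGr : ∀ i, γf i ∈ Gr :=
    fun i => Subgroup.subset_closure (Finset.mem_coe.2 (Finset.mem_image.2
      ⟨i, Finset.mem_univ i, rfl⟩))
  have hGrΓ : Gr ≤ Γ := (Subgroup.closure_le Γ).2 hTsub
  -- the counting condition
  have hcount : ∀ x : X, ({y | ∃ g' ∈ Gr, g' x = y} ∩ C).ncard
      = ({y | ∃ g' ∈ Gr, g' x = y} ∩ D).ncard := by
    intro x
    set O : Set X := {y | ∃ g' ∈ Gr, g' x = y} with hO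
    have hOfin : O.Finite := by
      have : O = (fun g' : X ≃ₜ X => g' x) '' (Gr : Set (X ≃ₜ X)) := by
        ext y
        simp only [hO, mem_setOf_eq, Set.mem_image, SetLike.mem_coe]
      rw [this]
      exact hGfin.image _
    have hOinv : ∀ γ ∈ Gr, γ '' O = O := by
      intro γ hγ
      ext y
      constructor
      · rintro ⟨z, ⟨g', hg', rfl⟩, rfl⟩
        exact ⟨γ * g', mul_mem hγ hg', rfl⟩
      · rintro ⟨g', hg', rfl⟩
        refine ⟨(γ⁻¹ * g') x, ⟨γ⁻¹ * g', mul_mem (inv_mem hγ) hg', rfl⟩, ?_⟩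
        rw [← homeo_mul_apply, ← mul_assoc, mul_inv_cancel, one_mul]
    have hsplit : ∀ (W : Fin n → Set X), (⋃ i, W i)ᶜ ∩ O = O \ ⋃ i ∈ (Finset.univ : Finset (Fin n)), (W i ∩ O) := by
      intro W
      ext y
      simp only [Set.mem_inter_iff, Set.mem_compl_iff, Set.mem_iUnion, Set.mem_diff,
        Finset.mem_univ, Set.mem_inter_iff, exists_true_left]
      constructor
      · rintro ⟨hy1, hy2⟩
        refine ⟨hy2, ?_⟩
        intro ⟨i, hi⟩
        exact hy1 ⟨i, hi.1⟩
      · rintro ⟨hy1, hy2⟩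
        refine ⟨?_, hy1⟩
        intro ⟨i, hi⟩
        exact hy2 ⟨i, hi, hy1⟩
    have hsum : ∀ (W : Fin n → Set X), Pairwise (Function.onFun Disjoint W) →
        (⋃ i ∈ (Finset.univ : Finset (Fin n)), (W i ∩ O)).ncard
          = ∑ i ∈ (Finset.univ : Finset (Fin n)), (W i ∩ O).ncard := by
      intro W hW
      exact ncard_biUnion_finset _ _ (fun i _ => hOfin.subset Set.inter_subset_right)
        (fun i _ j _ hij => (hW hij).mono (Set.inter_subset_left) (Set.inter_subset_left))
    have hsub1 : (⋃ i ∈ (Finset.univ : Finset (Fin n)), (V i ∩ O)) ⊆ O := by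
      intro y hy
      obtain ⟨i, -, hyi⟩ := Set.mem_iUnion₂.1 hy
      exact hyi.2
    have hsub2 : (⋃ i ∈ (Finset.univ : Finset (Fin n)), ((γf i '' V i) ∩ O)) ⊆ O := by
      intro y hy
      obtain ⟨i, -, hyi⟩ := Set.mem_iUnion₂.1 hy
      exact hyi.2
    have hterm : ∀ i, ((γf i '' V i) ∩ O).ncard = (V i ∩ O).ncard := by
      intro i
      have : (γf i '' V i) ∩ O = γf i '' (V i ∩ O) := by
        rw [Set.image_inter (γf i).injective, hOinv (γf i) (hγGr i)]
      rw [this, Set.ncard_image_of_injective _ (γf i).injective]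
    have e1 : (C ∩ O).ncard = (D ∩ O).ncard := by
      rw [hC, hD, hsplit V, hsplit (fun i => γf i '' V i),
        Set.ncard_diff hsub1 ((hOfin.subset hsub1)),
        Set.ncard_diff hsub2 ((hOfin.subset hsub2)),
        hsum V hVdisj, hsum (fun i => γf i '' V i) hVimdisj]
      congr 1
      exact (Finset.sum_congr rfl (fun i _ => (hterm i))).symm
    rw [Set.inter_comm O C, Set.inter_comm O D]
    exact e1
  -- apply the matching lemma
  obtain ⟨ι, hι, P, h, hPcl, hhmem, hPdisj, hPC, hPimdisj, hPD⟩ :=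
    matching_lemma Gr hGfin hCcl hDcl hcount
  -- glue everything
  haveI := hι
  set Uall : Fin n ⊕ ι → Set X := Sum.elim V P with hUall
  set mall : Fin n ⊕ ι → X ≃ₜ X := Sum.elim γf h with hmall
  have hUallcl : ∀ a, IsClopen (Uall a) := by
    rintro (i | j)
    · exact hVcl i
    · exact hPcl j
  have hUalldisj : Pairwise (Function.onFun Disjoint Uall) := by
    rintro (i | j) (i' | j') hab
    · exact hVdisj (fun hh => hab (congrArg Sum.inl hh))
    · show Disjoint (V i) (P j')
      have h2 : P j' ⊆ (⋃ k, V k)ᶜ := by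
        rw [← hC, ← hPC]; exact Set.subset_iUnion P j'
      exact Disjoint.mono (Set.subset_iUnion V i) h2 disjoint_compl_right
    · show Disjoint (P j) (V i')
      have h2 : P j ⊆ (⋃ k, V k)ᶜ := by
        rw [← hC, ← hPC]; exact Set.subset_iUnion P j
      exact Disjoint.mono h2 (Set.subset_iUnion V i') disjoint_compl_left
    · exact hPdisj (fun hh => hab (congrArg Sum.inr hh))
  have hUallcov : ⋃ a, Uall a = univ := by
    rw [hUall, Set.iUnion_sum]
    simp only [Sum.elim_inl, Sum.elim_inr]
    rw [hPC, hC]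
    exact Set.union_compl_self _
  have hMalldisj : Pairwise (Function.onFun Disjoint (fun a => mall a '' Uall a)) := by
    rintro (i | j) (i' | j') hab
    · exact hVimdisj (fun hh => hab (congrArg Sum.inl hh))
    · show Disjoint (γf i '' V i) (h j' '' P j')
      have h2 : h j' '' P j' ⊆ (⋃ k, γf k '' V k)ᶜ := by
        rw [← hD, ← hPD]; exact Set.subset_iUnion (fun k => h k '' P k) j'
      exact Disjoint.mono (Set.subset_iUnion (fun k => γf k '' V k) i) h2 disjoint_compl_right
    · show Disjoint (h j '' P j) (γf i' '' V i')
      have h2 : h j '' P j ⊆ (⋃ k, γf k '' V k)ᶜ := by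
        rw [← hD, ← hPD]; exact Set.subset_iUnion (fun k => h k '' P k) j
      exact Disjoint.mono h2 (Set.subset_iUnion (fun k => γf k '' V k) i') disjoint_compl_left
    · exact hPimdisj (fun hh => hab (congrArg Sum.inr hh))
  have hMallcov : ⋃ a, mall a '' Uall a = univ := by
    have : (⋃ a, mall a '' Uall a)
        = (⋃ i, γf i '' V i) ∪ (⋃ j, h j '' P j) := by
      rw [hUall, hmall]
      rw [Set.iUnion_sum]
      simp only [Sum.elim_inl, Sum.elim_inr]
    rw [this, hPD, hD]
    exact Set.union_compl_self _
  obtain ⟨f, hf⟩ := glue_exists Uall mall hUallcl hUalldisj hUallcov hMalldisj hMallcov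
  have hfV : ∀ i, ∀ x ∈ V i, f x = γf i x := fun i => hf (Sum.inl i)
  have hfΓ : f ∈ Γ := by
    apply hfull
    refine piecewiseIn_of_fintype Γ f Uall mall hUallcl ?_ hUalldisj hUallcov hf
    rintro (i | j)
    · exact hγmem i
    · exact hGrΓ (hhmem j)
  have hfA : ∀ i, f '' A i = B i := by
    intro i
    rw [hB]
    simp only
    exact Set.image_congr (fun x hx => hfV i x (hAV i hx))
  have hfK : f '' K = K := by
    conv_lhs => rw [← hAcover]
    rw [Set.image_iUnion]
    calc ⋃ i, f '' A i = ⋃ i, B i := by simp only [hfA]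
    _ = K := hBcover
  have hfpt : ∀ x : K, ((g x : K) : X) = f (x : X) := by
    intro x
    have hxK : (x : X) ∈ ⋃ i, A i := by rw [hAcover]; exact x.2
    obtain ⟨i, hxi⟩ := Set.mem_iUnion.1 hxK
    obtain ⟨u, hu, hux⟩ := hxi
    have hxu : u = x := Subtype.ext hux
    subst hxu
    rw [hag i u hu, hγpt i u, (hfV i _ (hAV i ⟨u, hu, rfl⟩)).symm]
  exact ⟨f, hfΓ, hfK, hfpt⟩

end MainFull
section Gen

variable {X : Type*} [TopologicalSpace X] [CompactSpace X] [T2Space X]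
  [TotallyDisconnectedSpace X]

/-- Every induced map of an involution extends to an element of `Γ` preserving `K`. -/
lemma gen_subset_restr {Γ : Subgroup (X ≃ₜ X)} {K : Set X}
    (hfull : IsFullGroup Γ) (hK : IsEtale Γ K)
    {f : K ≃ₜ K} {γ : X ≃ₜ X} (hγ : γ ∈ Γ) (hinv : γ * γ = 1)
    (hf : ∀ x : K, f x = inducedMap γ K x) : f ∈ restrGroup Γ K := by
  classical
  set E : Set X := γ '' K ∩ K with hE
  have hEK : IsClopenIn K E := hK.2 γ hγ K
    ⟨Set.Subset.rfl, by rw [Subtype.coe_preimage_self]; exact isClopen_univ⟩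
  have hEinv : ∀ x ∈ E, γ x ∈ E := by
    rintro x ⟨hx1, hx2⟩
    exact ⟨Set.mem_image_of_mem _ hx2, (invol_mem_image_iff hinv K x).1 hx1⟩
  obtain ⟨W₀, hW₀cl, hW₀K⟩ := exists_clopen_extension hK.1 hEK
  set W : Set X := W₀ ∩ ⇑γ ⁻¹' W₀ with hW
  have hWcl : IsClopen W := hW₀cl.inter (hW₀cl.preimage γ.continuous)
  have hγW₀ : γ '' W₀ = ⇑γ ⁻¹' W₀ := by
    ext z
    rw [Set.mem_preimage]
    exact invol_mem_image_iff hinv W₀ z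
  have hγW : γ '' W = W := by
    rw [hW, Set.image_inter_preimage, hγW₀, Set.inter_comm]
  have hEW : E ⊆ W := by
    intro x hx
    have hx1 : x ∈ W₀ := by
      have := hW₀K ▸ hx
      exact ((Set.ext_iff.1 hW₀K x).2 hx).1
    have hx2 : γ x ∈ W₀ := ((Set.ext_iff.1 hW₀K (γ x)).2 (hEinv x hx)).1
    exact ⟨hx1, hx2⟩
  have hWK : W ∩ K = E := by
    apply Set.Subset.antisymm
    · intro x hx
      rw [← hW₀K]
      exact ⟨hx.1.1, hx.2⟩
    · intro x hx
      exact ⟨hEW hx, ((Set.ext_iff.1 hW₀K x).2 hx).2⟩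
  -- glue γ on W with the identity on Wᶜ
  set UB : Bool → Set X := fun b => cond b W Wᶜ with hUB
  set mB : Bool → X ≃ₜ X := fun b => cond b γ 1 with hmB
  have hUBcl : ∀ b, IsClopen (UB b) := by
    intro b; cases b
    · exact hWcl.compl
    · exact hWcl
  have himB : ∀ b, mB b '' UB b = UB b := by
    intro b; cases b
    · exact Set.image_id' _
    · exact hγW
  have hUBdisj : Pairwise (Function.onFun Disjoint UB) := by
    intro a b hab
    cases a <;> cases b
    · exact absurd rfl hab
    · exact disjoint_compl_left
    · exact disjoint_compl_right
    · exact absurd rfl hab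
  have hUBcov : ⋃ b, UB b = univ := by
    rw [Set.iUnion_eq_univ_iff]
    intro x
    by_cases hx : x ∈ W
    · exact ⟨true, hx⟩
    · exact ⟨false, hx⟩
  have hUBdisj' : Pairwise (Function.onFun Disjoint (fun b => mB b '' UB b)) := by
    have : (fun b => mB b '' UB b) = UB := funext himB
    rw [this]
    exact hUBdisj
  have hUBcov' : ⋃ b, mB b '' UB b = univ := by
    have : (fun b => mB b '' UB b) = UB := funext himB
    rw [this]
    exact hUBcov
  obtain ⟨γ', hγ'⟩ := glue_exists UB mB hUBcl hUBdisj hUBcov hUBdisj' hUBcov'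
  have hγ'W : ∀ x ∈ W, γ' x = γ x := hγ' true
  have hγ'Wc : ∀ x ∉ W, γ' x = x := fun x hx => hγ' false x hx
  have hγ'Γ : γ' ∈ Γ := by
    apply hfull
    refine piecewiseIn_of_fintype Γ γ' UB mB hUBcl ?_ hUBdisj hUBcov hγ'
    intro b; cases b
    · exact one_mem Γ
    · exact hγ
  have hγ'K : γ' '' K = K := by
    have hKdecomp : K = E ∪ (K \ E) := (Set.union_diff_cancel (fun x hx => hx.2)).symm
    have h1 : γ' '' E = E := by
      rw [Set.image_congr (fun x hx => hγ'W x (hEW hx))]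
      exact invol_image_invariant hinv hEinv
    have h2 : γ' '' (K \ E) = K \ E := by
      rw [Set.image_congr (fun x hx => hγ'Wc x (fun hw => hx.2 ((Set.ext_iff.1 hWK x).1 ⟨hw, hx.1⟩)))]
      exact Set.image_id _
    conv_lhs => rw [hKdecomp]
    conv_rhs => rw [hKdecomp]
    rw [Set.image_union, h1, h2]
  refine ⟨γ', hγ'Γ, hγ'K, fun x => ?_⟩
  rw [hf x]
  by_cases hmem : γ (x : X) ∈ K
  · have e1 : inducedMap γ K x = ⟨γ (x : X), hmem⟩ := dif_pos hmem
    rw [e1]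
    have hxE : (x : X) ∈ E := ⟨(invol_mem_image_iff hinv K (x : X)).2 hmem, x.2⟩
    exact ((hγ'W (x : X) (hEW hxE)).symm : (⟨γ (x : X), hmem⟩ : K).1 = γ' (x : X))
  · have e1 : inducedMap γ K x = x := dif_neg hmem
    rw [e1]
    have hxE : (x : X) ∉ E := fun h => hmem ((invol_mem_image_iff hinv K (x : X)).1 h.1)
    have hxW : (x : X) ∉ W := fun h => hxE ((Set.ext_iff.1 hWK (x : X)).1 ⟨h, x.2⟩)
    exact (hγ'Wc (x : X) hxW).symm

/-- Every restriction of an element of `Γ` preserving `K` belongs to every full group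
containing the induced involutions. -/
lemma restr_subset_full {Γ : Subgroup (X ≃ₜ X)} {K : Set X}
    (hample : IsAmpleGroup Γ) (hK : IsEtale Γ K)
    (H : Subgroup ((K : Set X) ≃ₜ (K : Set X)))
    (hSH : {f : (K : Set X) ≃ₜ (K : Set X) | ∃ γ : X ≃ₜ X, γ ∈ Γ ∧ γ * γ = 1 ∧
      ∀ x : K, f x = inducedMap γ K x} ⊆ (H : Set ((K : Set X) ≃ₜ (K : Set X))))
    (hH : IsFullGroup H)
    {g : (K : Set X) ≃ₜ (K : Set X)} (hg : g ∈ restrGroup Γ K) : g ∈ H := by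
  classical
  obtain ⟨γ, hγ, hγim, hγpt⟩ := hg
  obtain ⟨-, -, hfullΓ, hfix⟩ := hample
  set F : Set X := {x : X | γ x = x} with hF
  have hFcl : IsClopen F := hfix γ hγ
  -- clopen neighbourhoods moved off themselves by γ
  have hsep : ∀ x : X, γ x ≠ x → ∃ N : Set X, IsClopen N ∧ x ∈ N ∧ Disjoint N (γ '' N) := by
    intro x hx
    obtain ⟨U1, U2, hU1o, hU2o, hxU1, hγxU2, hdisj⟩ := t2_separation hx.symm
    have hxU : x ∈ U1 ∩ ⇑γ ⁻¹' U2 := ⟨hxU1, hγxU2⟩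
    obtain ⟨M, hMcl, hxM, hMsub⟩ := compact_exists_isClopen_in_isOpen
      (hU1o.inter (hU2o.preimage γ.continuous)) hxU
    refine ⟨M, hMcl, hxM, ?_⟩
    rw [Set.disjoint_left]
    rintro y hyM ⟨z, hz, rfl⟩
    exact Set.disjoint_left.1 hdisj (hMsub hyM).1 (hMsub hz).2
  -- cover the compact set K ∩ Fᶜ
  set Kc : Set X := K ∩ Fᶜ with hKc
  have hKcc : IsCompact Kc := (hK.1.inter hFcl.compl.1).isCompact
  have hNex : ∀ z : Kc, ∃ N : Set X, IsClopen N ∧ (z : X) ∈ N ∧ Disjoint N (γ '' N) :=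
    fun z => hsep (z : X) z.2.2
  choose N hNcl hNmem hNdisj using hNex
  obtain ⟨s, hs⟩ := hKcc.elim_finite_subcover (fun z : Kc => N z)
    (fun z => (hNcl z).2) (fun x hx => Set.mem_iUnion.2 ⟨⟨x, hx⟩, hNmem ⟨x, hx⟩⟩)
  set r := s.card with hr
  set e := s.equivFin with he
  set Nf : Fin r → Set X := fun i => N ((e.symm i) : Kc) with hNf
  have hNfcl : ∀ i, IsClopen (Nf i) := fun i => hNcl _
  have hNfdisj : ∀ i, Disjoint (Nf i) (γ '' Nf i) := fun i => hNdisj _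
  -- the involutions
  have hτex : ∀ i, ∃ τ : X ≃ₜ X, τ ∈ Γ ∧ τ * τ = 1 ∧ ∀ x ∈ Nf i, τ x = γ x :=
    fun i => exists_swap_homeo Γ hfullΓ hγ (hNfcl i) (hNfdisj i)
  choose τ hτmem hτinv hτeq using hτex
  -- the clopen pieces of K
  set A' : Fin r → Set X := fun i =>
    (Fᶜ ∩ Nf i) \ (⋃ j ∈ Finset.filter (fun j => j < i) Finset.univ, Nf j) with hA'
  have hA'cl : ∀ i, IsClopen (A' i) :=
    fun i => (hFcl.compl.inter (hNfcl i)).diff (isClopen_biUnion_finset (fun j _ => hNfcl j))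
  set UK : Fin r ⊕ Unit → Set (K : Set X) := Sum.elim
    (fun i => Subtype.val ⁻¹' (A' i)) (fun _ => Subtype.val ⁻¹' F) with hUK
  set mK : Fin r ⊕ Unit → ((K : Set X) ≃ₜ (K : Set X)) := Sum.elim
    (fun i => inducedHomeo (τ i) K (hτinv i) (clopen_indSet hK (hτmem i) (hτinv i)))
    (fun _ => 1) with hmK
  have hUKcl : ∀ a, IsClopen (UK a) := by
    rintro (i | u)
    · exact (hA'cl i).preimage continuous_subtype_val
    · exact hFcl.preimage continuous_subtype_val
  have hUKdisj : Pairwise (Function.onFun Disjoint UK) := by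
    have key : ∀ i j, j < i → Disjoint (A' i) (A' j) := by
      intro i j hji
      rw [Set.disjoint_left]
      intro x hxi hxj
      exact hxi.2 (Set.mem_biUnion (Finset.mem_filter.2 ⟨Finset.mem_univ j, hji⟩) hxj.1.2)
    have keyF : ∀ i, Disjoint (A' i) F := by
      intro i
      rw [Set.disjoint_left]
      intro x hxi hxF
      exact hxi.1.1 hxF
    rintro (i | u) (i' | u') hab
    · show Disjoint (Subtype.val ⁻¹' (A' i)) (Subtype.val ⁻¹' (A' i'))
      have hii' : i ≠ i' := fun hh => hab (congrArg Sum.inl hh)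
      rcases hii'.lt_or_gt with hlt | hlt
      · exact ((key i' i hlt).symm).preimage _
      · exact (key i i' hlt).preimage _
    · exact (keyF i).preimage _
    · exact ((keyF i').symm).preimage _
    · exact absurd (congrArg Sum.inr (Subsingleton.elim u u')) hab
  have hUKcov : ⋃ a, UK a = univ := by
    rw [Set.eq_univ_iff_forall]
    intro x
    by_cases hxF : (x : X) ∈ F
    · exact Set.mem_iUnion.2 ⟨Sum.inr (), hxF⟩
    · have hxKc : (x : X) ∈ Kc := ⟨x.2, hxF⟩
      have hcov := hs hxKc
      obtain ⟨z, hz⟩ := Set.mem_iUnion.1 hcov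
      obtain ⟨hzs, hzN⟩ := Set.mem_iUnion.1 hz
      -- there is a minimal index i with x ∈ Nf i
      have hex : ∃ i : Fin r, (x : X) ∈ Nf i := by
        refine ⟨e ⟨z, hzs⟩, ?_⟩
        have heq : (e.symm (e ⟨z, hzs⟩)) = ⟨z, hzs⟩ := Equiv.symm_apply_apply _ _
        have hset : Nf (e ⟨z, hzs⟩) = N z :=
          congrArg (fun w : { x // x ∈ s } => N ((w : Kc))) heq
        rw [hset]
        exact hzN
      set Sx : Finset (Fin r) := Finset.filter (fun i => (x : X) ∈ Nf i) Finset.univ with hSx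
      have hSxne : Sx.Nonempty := ⟨hex.choose, Finset.mem_filter.2 ⟨Finset.mem_univ _, hex.choose_spec⟩⟩
      set i0 := Sx.min' hSxne with hi0
      have hi0mem : (x : X) ∈ Nf i0 := (Finset.mem_filter.1 (Sx.min'_mem hSxne)).2
      refine Set.mem_iUnion.2 ⟨Sum.inl i0, ⟨⟨hxF, hi0mem⟩, ?_⟩⟩
      intro hbad
      obtain ⟨j, hj, hxj⟩ := Set.mem_iUnion₂.1 hbad
      have hji : j < i0 := (Finset.mem_filter.1 hj).2
      have : j ∈ Sx := Finset.mem_filter.2 ⟨Finset.mem_univ j, hxj⟩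
      exact absurd (Sx.min'_le j this) (not_le.2 hji)
  have hUKmem : ∀ a, mK a ∈ H := by
    rintro (i | u)
    · refine hSH ⟨τ i, hτmem i, hτinv i, fun x => rfl⟩
    · exact one_mem H
  have hUKag : ∀ a, ∀ x ∈ UK a, g x = mK a x := by
    rintro (i | u) x hx
    · show g x = inducedHomeo (τ i) K (hτinv i) (clopen_indSet hK (hτmem i) (hτinv i)) x
      apply Subtype.ext
      have hγxK : γ (x : X) ∈ K := by
        have hmem : γ (x : X) ∈ γ '' K := Set.mem_image_of_mem _ x.2
        rw [hγim] at hmem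
        exact hmem
      have hτx : τ i (x : X) = γ (x : X) := hτeq i (x : X) hx.1.2
      have hτxK : τ i (x : X) ∈ K := by rw [hτx]; exact hγxK
      have e1 : inducedMap (τ i) K x = ⟨τ i (x : X), hτxK⟩ := dif_pos hτxK
      show ((g x : K) : X) = ((inducedMap (τ i) K x : K) : X)
      rw [e1, hγpt x]
      exact hτx.symm
    · show g x = x
      apply Subtype.ext
      rw [hγpt x]
      exact hx
  exact hH g (piecewiseIn_of_fintype H g UK mK hUKcl hUKmem hUKdisj hUKcov hUKag)

end Gen
section Final

variable {X : Type*} [TopologicalSpace X]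

lemma restr_countable {Γ : Subgroup (X ≃ₜ X)} (K : Set X)
    (hc : (Γ : Set (X ≃ₜ X)).Countable) : (restrGroup Γ K).Countable := by
  obtain ⟨φ, hφ⟩ := restrGroup_subset_phi_image (X := X) (K := K)
  exact (hc.image φ).mono (hφ Γ)

lemma restr_locfin {Γ : Subgroup (X ≃ₜ X)} (K : Set X)
    (hlf : IsLocallyFiniteGroup Γ) : IsLocallyFiniteGroup (restrSubgroup Γ K) := by
  classical
  intro S hS
  have hwit : ∀ f : (K : Set X) ≃ₜ (K : Set X), f ∈ S →
      ∃ γ : X ≃ₜ X, γ ∈ Γ ∧ γ '' K = K ∧ ∀ x : K, ((f x : K) : X) = γ (x : X) := by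
    intro f hf
    exact hS hf
  choose! γw hγw1 hγw2 hγw3 using hwit
  set T : Finset (X ≃ₜ X) := S.image γw with hT
  have hTsub : (T : Set (X ≃ₜ X)) ⊆ (Γ : Set (X ≃ₜ X)) := by
    intro γ hγ
    obtain ⟨f, hf, rfl⟩ := Finset.mem_image.1 (Finset.mem_coe.1 hγ)
    exact hγw1 f hf
  have hfin := hlf T hTsub
  set Gr' : Subgroup (X ≃ₜ X) := Subgroup.closure (T : Set (X ≃ₜ X)) with hGr'
  have hSsub : (S : Set ((K : Set X) ≃ₜ (K : Set X))) ⊆ (restrSubgroup Gr' K : Set _) := by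
    intro f hf
    have hfS : f ∈ S := Finset.mem_coe.1 hf
    exact ⟨γw f, Subgroup.subset_closure (Finset.mem_coe.2 (Finset.mem_image_of_mem γw hfS)),
      hγw2 f hfS, hγw3 f hfS⟩
  have hle : Subgroup.closure (S : Set ((K : Set X) ≃ₜ (K : Set X))) ≤ restrSubgroup Gr' K :=
    (Subgroup.closure_le _).2 hSsub
  obtain ⟨φ, hφ⟩ := restrGroup_subset_phi_image (X := X) (K := K)
  have hsub : ((Subgroup.closure (S : Set ((K : Set X) ≃ₜ (K : Set X)))
      : Subgroup ((K : Set X) ≃ₜ (K : Set X))) : Set _) ⊆ φ '' (Gr' : Set (X ≃ₜ X)) :=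
    fun g hg => hφ Gr' (hle hg)
  exact (hfin.image φ).subset hsub

lemma restr_fix {Γ : Subgroup (X ≃ₜ X)} {K : Set X}
    (hfix : ∀ γ ∈ Γ, IsClopen {x : X | γ x = x})
    {g : (K : Set X) ≃ₜ (K : Set X)} (hg : g ∈ restrGroup Γ K) :
    IsClopen {x : K | g x = x} := by
  obtain ⟨γ, hγ, -, hp⟩ := hg
  have heq : {x : K | g x = x} = Subtype.val ⁻¹' {y : X | γ y = y} := by
    ext x
    simp only [Set.mem_setOf_eq, Set.mem_preimage]
    constructor
    · intro h
      rw [← hp x, h]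
    · intro h
      apply Subtype.ext
      rw [hp x, h]
  rw [heq]
  exact (hfix γ hγ).preimage continuous_subtype_val

end Final

/-- the smallest full subgroup of `Homeo(K)` containing the maps `γ_K`
for involutions `γ ∈ Γ` is exactly the group of restrictions to `K` of elements of `Γ`
mapping `K` onto itself; in particular it is an ample group over `K`. -/
theorem restrGroup_eq_smallest_full {X : Type*} [TopologicalSpace X]
    (hX : IsCantorSpace X) (Γ : Subgroup (X ≃ₜ X)) (hample : IsAmpleGroup Γ)
    (hmin : IsMinimalGroup Γ) (K : Set X) (hK : IsEtale Γ K) :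
    ∃ ΓK : Subgroup ((K : Set X) ≃ₜ (K : Set X)),
      ({f : (K : Set X) ≃ₜ (K : Set X) | ∃ γ : X ≃ₜ X, γ ∈ Γ ∧ γ * γ = 1 ∧
          ∀ x : K, f x = inducedMap γ K x} ⊆ (ΓK : Set ((K : Set X) ≃ₜ (K : Set X)))) ∧
      IsFullGroup ΓK ∧
      (∀ H : Subgroup ((K : Set X) ≃ₜ (K : Set X)),
        {f : (K : Set X) ≃ₜ (K : Set X) | ∃ γ : X ≃ₜ X, γ ∈ Γ ∧ γ * γ = 1 ∧
          ∀ x : K, f x = inducedMap γ K x} ⊆ (H : Set ((K : Set X) ≃ₜ (K : Set X))) →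
        IsFullGroup H → ΓK ≤ H) ∧
      (ΓK : Set ((K : Set X) ≃ₜ (K : Set X))) = restrGroup Γ K ∧
      IsAmpleGroup ΓK := by
  obtain ⟨hne, hcomp, hmetr, htd, hperf⟩ := hX
  haveI := hcomp
  haveI := htd
  haveI := hmetr
  letI : MetricSpace X := TopologicalSpace.metrizableSpaceMetric X
  refine ⟨restrSubgroup Γ K, ?_, restr_full hample hK, ?_, rfl, ?_⟩
  · rintro f ⟨γ, hγ, hinv, hf⟩
    exact gen_subset_restr hample.2.2.1 hK hγ hinv hf
  · intro H hSH hHfull g hg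
    exact restr_subset_full hample hK H hSH hHfull hg
  · exact ⟨restr_countable K hample.1, restr_locfin K hample.2.1,
      restr_full hample hK, fun g hg => restr_fix hample.2.2.2 hg⟩
end

section
/- Let Γ and Λ be countable subgroups of Homeo(X), where X is the Cantor space, and let h be a homeomorphism of X realizing an orbit equivalence between R_Γ and R_Λ, i.e. (x, y) ∈ R_Γ ⇔ (h(x), h(y)) ∈ R_Λ for all x, y ∈ X. Then the pushforward map μ ↦ h_*μ is a bijection from M(Γ) onto M(Λ). -/
open MeasureTheory Set

/-- If `f` agrees pointwise with elements of a countable group `Γ`, then `f` preserves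
every `Γ`-invariant measure. -/
lemma map_eq_of_pointwise {X : Type*} [TopologicalSpace X] [MeasurableSpace X] [BorelSpace X]
    [T2Space X] (Γ : Subgroup (X ≃ₜ X)) (hc : (Γ : Set (X ≃ₜ X)).Countable)
    (μ : Measure X) (hμ : ∀ γ ∈ Γ, Measure.map (γ : X → X) μ = μ)
    (f : X ≃ₜ X) (hf : ∀ x, ∃ γ ∈ Γ, γ x = f x) :
    Measure.map (f : X → X) μ = μ := by
  obtain ⟨g, hg⟩ := hc.exists_eq_range ⟨1, Γ.one_mem⟩
  set E : ℕ → Set X := fun n => {x | f x = g n x} with hE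
  have hE_meas : ∀ n, MeasurableSet (E n) := fun n =>
    (isClosed_eq f.continuous (g n).continuous).measurableSet
  have hE_cover : (⋃ n, E n) = univ := by
    ext x
    simp only [mem_iUnion, mem_univ, iff_true]
    obtain ⟨γ, hγ, hγx⟩ := hf x
    have : γ ∈ Set.range g := hg ▸ hγ
    obtain ⟨n, rfl⟩ := this
    exact ⟨n, hγx.symm⟩
  set A : ℕ → Set X := disjointed E with hA
  have hA_meas : ∀ n, MeasurableSet (A n) := MeasurableSet.disjointed hE_meas
  have hA_sub : ∀ n, A n ⊆ E n := fun n => disjointed_subset E n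
  have hA_cover : (⋃ n, A n) = univ := by rw [hA, iUnion_disjointed, hE_cover]
  have hA_disj : Pairwise (Function.onFun Disjoint A) := disjoint_disjointed E
  have hg_mem : ∀ n, g n ∈ Γ := fun n => by
    rw [← SetLike.mem_coe, hg]; exact ⟨n, rfl⟩
  ext B hB
  rw [Measure.map_apply f.measurable hB]
  have hfA_meas : ∀ n, MeasurableSet (f '' A n) := by
    intro n
    exact f.measurableEmbedding.measurableSet_image.2 (hA_meas n)
  have h1 : μ (f ⁻¹' B) = ∑' n, μ (f ⁻¹' B ∩ A n) := by
    rw [← measure_iUnion]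
    · rw [← inter_iUnion, hA_cover, inter_univ]
    · exact fun i j hij => ((hA_disj hij).mono inter_subset_right inter_subset_right)
    · exact fun n => (f.measurable hB).inter (hA_meas n)
  have h2 : μ B = ∑' n, μ (B ∩ f '' A n) := by
    rw [← measure_iUnion]
    · rw [← inter_iUnion, ← image_iUnion, hA_cover, image_univ, f.range_coe, inter_univ]
    · intro i j hij
      exact ((Set.disjoint_image_iff f.injective).2 (hA_disj hij)).mono
        inter_subset_right inter_subset_right
    · exact fun n => hB.inter (hfA_meas n)
  have h3 : ∀ n, μ (f ⁻¹' B ∩ A n) = μ (B ∩ f '' A n) := by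
    intro n
    have key : f ⁻¹' B ∩ A n = (g n : X → X) ⁻¹' (B ∩ f '' A n) := by
      ext x
      constructor
      · rintro ⟨hxB, hxA⟩
        have hx : f x = g n x := hA_sub n hxA
        refine ⟨hx ▸ hxB, x, hxA, hx⟩
      · rintro ⟨hxB, y, hyA, hyx⟩
        have hy : f y = g n y := hA_sub n hyA
        have hxy : y = x := (g n).injective (by rw [← hy]; exact hyx)
        subst hxy
        exact ⟨show f y ∈ B by rw [hy]; exact hxB, hyA⟩
    rw [key, ← Measure.map_apply (g n).measurable (hB.inter (hfA_meas n)), hμ _ (hg_mem n)]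
  rw [h1, h2]
  exact tsum_congr h3

/-- One direction of the pushforward statement. -/
lemma mapsTo_pushforward {X : Type*} [TopologicalSpace X] [MeasurableSpace X] [BorelSpace X]
    [T2Space X] (Γ Λ : Subgroup (X ≃ₜ X)) (hΓc : (Γ : Set (X ≃ₜ X)).Countable)
    (h : X ≃ₜ X)
    (horb : ∀ x y : X, orbitRelOf Γ x y ↔ orbitRelOf Λ (h x) (h y)) :
    Set.MapsTo (fun μ : Measure X => Measure.map (h : X → X) μ)
      (InvProbMeasures Γ) (InvProbMeasures Λ) := by
  rintro μ ⟨hp, hinv⟩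
  constructor
  · exact Measure.isProbabilityMeasure_map h.measurable.aemeasurable
  · intro lam hlam
    set f : X ≃ₜ X := h.trans ((lam : X ≃ₜ X).trans h.symm) with hfdef
    have hf_app : ∀ x, f x = h.symm ((lam : X ≃ₜ X) (h x)) := fun x => rfl
    have hf : ∀ x, ∃ γ ∈ Γ, γ x = f x := by
      intro x
      refine (horb x (f x)).mpr ⟨lam, hlam, ?_⟩
      rw [hf_app, h.apply_symm_apply]
    have hmapf : Measure.map (f : X → X) μ = μ :=
      map_eq_of_pointwise Γ hΓc μ hinv f hf
    have hcomp : ((lam : X ≃ₜ X) : X → X) ∘ (h : X → X) = (h : X → X) ∘ (f : X → X) := by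
      funext x
      rw [Function.comp_apply, Function.comp_apply, hf_app, h.apply_symm_apply]
    calc Measure.map ((lam : X ≃ₜ X) : X → X) (Measure.map (h : X → X) μ)
        = Measure.map (((lam : X ≃ₜ X) : X → X) ∘ (h : X → X)) μ :=
          Measure.map_map (lam : X ≃ₜ X).measurable h.measurable
      _ = Measure.map ((h : X → X) ∘ (f : X → X)) μ := by rw [hcomp]
      _ = Measure.map (h : X → X) (Measure.map (f : X → X) μ) :=
          (Measure.map_map h.measurable f.measurable).symm
      _ = Measure.map (h : X → X) μ := by rw [hmapf]

/-- an orbit equivalence pushes invariant measures to invariant measures,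
bijectively. -/
theorem orbit_equivalence_pushforward_measures {X : Type*} [TopologicalSpace X]
    [MeasurableSpace X] [BorelSpace X] (hX : IsCantorSpace X)
    (Γ Λ : Subgroup (X ≃ₜ X))
    (hΓc : (Γ : Set (X ≃ₜ X)).Countable) (hΛc : (Λ : Set (X ≃ₜ X)).Countable)
    (h : X ≃ₜ X)
    (horb : ∀ x y : X, orbitRelOf Γ x y ↔ orbitRelOf Λ (h x) (h y)) :
    Set.BijOn (fun μ : MeasureTheory.Measure X => MeasureTheory.Measure.map (h : X → X) μ)
      (InvProbMeasures Γ) (InvProbMeasures Λ) := by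
  haveI : TopologicalSpace.MetrizableSpace X := hX.2.2.1
  haveI : T2Space X := by
    letI := TopologicalSpace.metrizableSpaceMetric X
    infer_instance
  have horb' : ∀ x y : X, orbitRelOf Λ x y ↔ orbitRelOf Γ (h.symm x) (h.symm y) := by
    intro x y
    have := horb (h.symm x) (h.symm y)
    rw [h.apply_symm_apply, h.apply_symm_apply] at this
    exact this.symm
  have hmt : Set.MapsTo (fun μ : Measure X => Measure.map (h : X → X) μ)
      (InvProbMeasures Γ) (InvProbMeasures Λ) :=
    mapsTo_pushforward Γ Λ hΓc h horb
  have hmt' : Set.MapsTo (fun μ : Measure X => Measure.map (h.symm : X → X) μ)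
      (InvProbMeasures Λ) (InvProbMeasures Γ) :=
    mapsTo_pushforward Λ Γ hΛc h.symm horb'
  have hleft : ∀ μ : Measure X,
      Measure.map (h.symm : X → X) (Measure.map (h : X → X) μ) = μ := by
    intro μ
    rw [Measure.map_map h.symm.measurable h.measurable]
    have : (h.symm : X → X) ∘ (h : X → X) = id := by
      funext x; exact h.symm_apply_apply x
    rw [this, Measure.map_id]
  have hright : ∀ ν : Measure X,
      Measure.map (h : X → X) (Measure.map (h.symm : X → X) ν) = ν := by
    intro ν
    rw [Measure.map_map h.measurable h.symm.measurable]
    have : (h : X → X) ∘ (h.symm : X → X) = id := by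
      funext x; exact h.apply_symm_apply x
    rw [this, Measure.map_id]
  refine ⟨hmt, ?_, ?_⟩
  · intro μ _ ν _ hμν
    have := congrArg (fun ρ => Measure.map (h.symm : X → X) ρ) hμν
    simpa [hleft μ, hleft ν] using this
  · intro ν hν
    exact ⟨Measure.map (h.symm : X → X) ν, hmt' hν, hright ν⟩
end
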